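/- arXiv:math-ph/0310059 — 4 statements merged into one kernel-verified Lean document; each statement's English description precedes it below -/
import Mathlib

section
/- Let A ≥ 1 and B ≥ 1. Then λ(∅) = 2, and for every nonempty X ⊆ {1,…,N} with X:m one has λ(X) ≥ 6. -/
open Finset
open scoped symmDiff

/-- The set of bonds `⟨j,j+1⟩` (labelled by `j ∈ {1,…,N-1}`) such that exactly one of
`j`, `j+1` belongs to `Y`. -/
def bdry (N : ℕ) (Y : Finset ℕ) : Finset ℕ :=
  (Finset.Icc 1 (N - 1)).filter fun j => (j ∈ Y ∧ j + 1 ∉ Y) ∨ (j ∉ Y ∧ j + 1 ∈ Y)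

/-- `λ(X) = 2·|∂(X Δ M)| + 2A·[1 ∈ X] + 2B·[N ∈ X]`, where `M = {1,…,m}`. -/
def lam (N m : ℕ) (A B : ℝ) (X : Finset ℕ) : ℝ :=
  2 * (bdry N (X ∆ Finset.Icc 1 m)).card
    + 2 * A * (if 1 ∈ X then 1 else 0)
    + 2 * B * (if N ∈ X then 1 else 0)

private lemma exists_trans_aux (P : ℕ → Prop) :
    ∀ d a b, b = a + d + 1 → P a → ¬ P b → ∃ j, a ≤ j ∧ j + 1 ≤ b ∧ P j ∧ ¬ P (j + 1) := by
  intro d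
  induction d with
  | zero =>
    intro a b hb ha hbn
    exact ⟨a, le_refl _, by omega, ha, by rwa [show a + 1 = b by omega]⟩
  | succ d ih =>
    intro a b hb ha hbn
    by_cases h : P (a + 1)
    · obtain ⟨j, h1, h2, h3, h4⟩ := ih (a + 1) b (by omega) h hbn
      exact ⟨j, by omega, h2, h3, h4⟩
    · exact ⟨a, le_refl _, by omega, ha, h⟩

private lemma exists_trans (P : ℕ → Prop) (a b : ℕ) (hab : a < b) (ha : P a) (hb : ¬ P b) :
    ∃ j, a ≤ j ∧ j + 1 ≤ b ∧ P j ∧ ¬ P (j + 1) :=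
  exists_trans_aux P (b - a - 1) a b (by omega) ha hb

private lemma mem_bdry {N : ℕ} {Y : Finset ℕ} {j : ℕ} :
    j ∈ bdry N Y ↔ (1 ≤ j ∧ j ≤ N - 1) ∧ ((j ∈ Y ∧ j + 1 ∉ Y) ∨ (j ∉ Y ∧ j + 1 ∈ Y)) := by
  simp [bdry, Finset.mem_filter, Finset.mem_Icc]

theorem lam_empty_eq_two_and_lam_ge_six (N m : ℕ) (hm : 0 < m) (hmN : m < N)
    (A B : ℝ) (hA : 1 ≤ A) (hB : 1 ≤ B) :
    lam N m A B ∅ = 2 ∧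
      ∀ X : Finset ℕ, X ⊆ Finset.Icc 1 N → X ≠ ∅ →
        (X ∆ Finset.Icc 1 m).card = m → 6 ≤ lam N m A B X := by
  constructor
  · -- λ(∅) = 2
    have hY : (∅ : Finset ℕ) ∆ Finset.Icc 1 m = Finset.Icc 1 m := bot_symmDiff _
    have hb : bdry N (Finset.Icc 1 m) = {m} := by
      ext j
      simp only [mem_bdry, Finset.mem_Icc, Finset.mem_singleton]
      omega
    simp [lam, hY, hb]
  · intro X hX hXne hcard
    set Y := X ∆ Finset.Icc 1 m with hYdef
    have hMsub : Finset.Icc 1 m ⊆ Finset.Icc 1 N := Finset.Icc_subset_Icc_right (le_of_lt hmN)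
    have hYsub : Y ⊆ Finset.Icc 1 N := by
      intro a ha
      rw [hYdef, Finset.mem_symmDiff] at ha
      rcases ha with ⟨h, _⟩ | ⟨h, _⟩
      · exact hX h
      · exact hMsub h
    have hmemY : ∀ a, a ∈ Y ↔ ((a ∈ X ∧ a ∉ Finset.Icc 1 m) ∨ (a ∈ Finset.Icc 1 m ∧ a ∉ X)) := by
      intro a; rw [hYdef, Finset.mem_symmDiff]
    have h1M : (1 : ℕ) ∈ Finset.Icc 1 m := by simp [Finset.mem_Icc]; omega
    have hNM : (N : ℕ) ∉ Finset.Icc 1 m := by simp [Finset.mem_Icc]; omega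
    have h1Y : (1 : ℕ) ∈ Y ↔ (1 : ℕ) ∉ X := by
      rw [hmemY]; constructor
      · rintro (⟨_, h⟩ | ⟨_, h⟩) <;> tauto
      · intro h; exact Or.inr ⟨h1M, h⟩
    have hNY : N ∈ Y ↔ N ∈ X := by
      rw [hmemY]; constructor
      · rintro (⟨h, _⟩ | ⟨h, _⟩) <;> tauto
      · intro h; exact Or.inl ⟨h, hNM⟩
    -- bounds on lam from card bounds
    have hmemYN : ∀ a ∈ Y, 1 ≤ a ∧ a ≤ N := by
      intro a ha; exact Finset.mem_Icc.mp (hYsub ha)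
    by_cases h1X : (1 : ℕ) ∈ X <;> by_cases hNX : N ∈ X
    · -- 1 ∈ X, N ∈ X : need card ≥ 1
      have h1 : (1 : ℕ) ∉ Y := fun h => (h1Y.mp h) h1X
      have hN : N ∈ Y := hNY.mpr hNX
      obtain ⟨j, hj1, hj2, hj3, hj4⟩ := exists_trans (fun n => n ∉ Y) 1 N (by omega) h1 (fun h => h hN)
      have hjb : j ∈ bdry N Y := by
        rw [mem_bdry]
        exact ⟨⟨hj1, by omega⟩, Or.inr ⟨hj3, not_not.mp hj4⟩⟩
      have hc : 1 ≤ (bdry N Y).card := Finset.card_pos.mpr ⟨j, hjb⟩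
      have hc' : (1 : ℝ) ≤ ((bdry N Y).card : ℝ) := by exact_mod_cast hc
      rw [lam, ← hYdef, if_pos h1X, if_pos hNX]
      nlinarith
    · -- 1 ∈ X, N ∉ X : need card ≥ 2
      have h1 : (1 : ℕ) ∉ Y := fun h => (h1Y.mp h) h1X
      have hN : N ∉ Y := fun h => hNX (hNY.mp h)
      have hYne : Y.Nonempty := by
        rw [← Finset.card_pos, hcard]; exact hm
      obtain ⟨y, hy⟩ := hYne
      have hy1 : 1 < y := by
        have := (hmemYN y hy).1
        rcases eq_or_lt_of_le this with h | h
        · exact absurd (h ▸ hy) h1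
        · exact h
      have hyN : y < N := by
        have := (hmemYN y hy).2
        rcases eq_or_lt_of_le this with h | h
        · exact absurd (h ▸ hy) hN
        · exact h
      obtain ⟨j1, ha1, ha2, ha3, ha4⟩ := exists_trans (fun n => n ∉ Y) 1 y hy1 h1 (fun h => h hy)
      obtain ⟨j2, hb1, hb2, hb3, hb4⟩ := exists_trans (fun n => n ∈ Y) y N hyN hy hN
      have hj1b : j1 ∈ bdry N Y := by
        rw [mem_bdry]; exact ⟨⟨ha1, by omega⟩, Or.inr ⟨ha3, not_not.mp ha4⟩⟩
      have hj2b : j2 ∈ bdry N Y := by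
        rw [mem_bdry]; exact ⟨⟨by omega, by omega⟩, Or.inl ⟨hb3, hb4⟩⟩
      have hne : j1 ≠ j2 := by omega
      have hc : 2 ≤ (bdry N Y).card := by
        rw [show (2:ℕ) = 1 + 1 from rfl]
        exact Finset.one_lt_card.mpr ⟨j1, hj1b, j2, hj2b, hne⟩
      have hc' : (2 : ℝ) ≤ ((bdry N Y).card : ℝ) := by exact_mod_cast hc
      rw [lam, ← hYdef, if_pos h1X, if_neg hNX]
      nlinarith
    · -- 1 ∉ X, N ∈ X : need card ≥ 2
      have h1 : (1 : ℕ) ∈ Y := h1Y.mpr h1X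
      have hN : N ∈ Y := hNY.mpr hNX
      have hzex : ∃ z, 1 ≤ z ∧ z ≤ N ∧ z ∉ Y := by
        by_contra hcon
        push_neg at hcon
        have hsub : Finset.Icc 1 N ⊆ Y := by
          intro a ha
          have := Finset.mem_Icc.mp ha
          exact hcon a this.1 this.2
        have := Finset.card_le_card hsub
        rw [hcard, Nat.card_Icc] at this
        omega
      obtain ⟨z, hz1, hz2, hz3⟩ := hzex
      have hz1' : 1 < z := by
        by_contra hcc
        have hez : z = 1 := by omega
        exact hz3 (hez ▸ h1)
      have hz2' : z < N := by
        by_contra hcc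
        have hez : z = N := by omega
        exact hz3 (hez ▸ hN)
      obtain ⟨j1, ha1, ha2, ha3, ha4⟩ := exists_trans (fun n => n ∈ Y) 1 z hz1' h1 hz3
      obtain ⟨j2, hb1, hb2, hb3, hb4⟩ := exists_trans (fun n => n ∉ Y) z N hz2' hz3 (fun h => h hN)
      have hj1b : j1 ∈ bdry N Y := by
        rw [mem_bdry]; exact ⟨⟨ha1, by omega⟩, Or.inl ⟨ha3, ha4⟩⟩
      have hj2b : j2 ∈ bdry N Y := by
        rw [mem_bdry]; exact ⟨⟨by omega, by omega⟩, Or.inr ⟨hb3, not_not.mp hb4⟩⟩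
      have hne : j1 ≠ j2 := by omega
      have hc : 2 ≤ (bdry N Y).card :=
        Finset.one_lt_card.mpr ⟨j1, hj1b, j2, hj2b, hne⟩
      have hc' : (2 : ℝ) ≤ ((bdry N Y).card : ℝ) := by exact_mod_cast hc
      rw [lam, ← hYdef, if_neg h1X, if_pos hNX]
      nlinarith
    · -- 1 ∉ X, N ∉ X : need card ≥ 3
      have h1 : (1 : ℕ) ∈ Y := h1Y.mpr h1X
      have hN : N ∉ Y := fun h => hNX (hNY.mp h)
      have hMcard : (Finset.Icc 1 m).card = m := by rw [Nat.card_Icc]; omega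
      have hYneM : Y ≠ Finset.Icc 1 m := by
        intro h
        apply hXne
        have h2 : X ∆ Finset.Icc 1 m ∆ Finset.Icc 1 m
            = Finset.Icc 1 m ∆ Finset.Icc 1 m := by rw [← hYdef, h]
        simpa [symmDiff_symmDiff_cancel_right, symmDiff_self] using h2
      -- ∃ q ∈ Y \ M
      have hq : ∃ q, q ∈ Y ∧ q ∉ Finset.Icc 1 m := by
        by_contra hcon
        push_neg at hcon
        exact hYneM (Finset.eq_of_subset_of_card_le hcon (by omega))
      -- ∃ p ∈ M \ Y
      have hp : ∃ p, p ∈ Finset.Icc 1 m ∧ p ∉ Y := by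
        by_contra hcon
        push_neg at hcon
        exact hYneM (Finset.eq_of_subset_of_card_le hcon (by omega)).symm
      obtain ⟨q, hqY, hqM⟩ := hq
      obtain ⟨p, hpM, hpY⟩ := hp
      have hpm : 1 ≤ p ∧ p ≤ m := Finset.mem_Icc.mp hpM
      have hq1 : m < q := by
        have := hmemYN q hqY
        simp only [Finset.mem_Icc] at hqM
        omega
      have hqN : q < N := by
        have := (hmemYN q hqY).2
        rcases eq_or_lt_of_le this with h | h
        · exact absurd (h ▸ hqY) hN
        · exact h
      have hp1 : 1 < p := by
        rcases eq_or_lt_of_le hpm.1 with h | h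
        · exact absurd (h ▸ h1) (h ▸ hpY)
        · exact h
      obtain ⟨j1, ha1, ha2, ha3, ha4⟩ := exists_trans (fun n => n ∈ Y) 1 p hp1 h1 hpY
      obtain ⟨j2, hb1, hb2, hb3, hb4⟩ := exists_trans (fun n => n ∉ Y) p q (by omega) hpY (fun h => h hqY)
      obtain ⟨j3, hd1, hd2, hd3, hd4⟩ := exists_trans (fun n => n ∈ Y) q N hqN hqY hN
      have hj1b : j1 ∈ bdry N Y := by
        rw [mem_bdry]; exact ⟨⟨ha1, by omega⟩, Or.inl ⟨ha3, ha4⟩⟩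
      have hj2b : j2 ∈ bdry N Y := by
        rw [mem_bdry]; exact ⟨⟨by omega, by omega⟩, Or.inr ⟨hb3, not_not.mp hb4⟩⟩
      have hj3b : j3 ∈ bdry N Y := by
        rw [mem_bdry]; exact ⟨⟨by omega, by omega⟩, Or.inl ⟨hd3, hd4⟩⟩
      have hc : 2 < (bdry N Y).card :=
        Finset.two_lt_card.mpr ⟨j1, hj1b, j2, hj2b, j3, hj3b, by omega, by omega, by omega⟩
      have hc' : (3 : ℝ) ≤ ((bdry N Y).card : ℝ) := by exact_mod_cast hc
      rw [lam, ← hYdef, if_neg h1X, if_neg hNX]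
      nlinarith
end

section
/- Assume A ≥ 1, B ≥ 1 and 2 ≤ m ≤ N−2. Let 0 denote the element with E = 0 and e(X) = 0 for all nonempty X with X:m. Then F(0) has E-component 0, e-component equal to −ε/2 at X = {m, m+1} and 0 at every other X, and ‖F(0)‖ = 2|ε|. -/
open Finset
open scoped symmDiff

/-- The sets `X ⊆ {1,…,N}` satisfying `X:m`, i.e. `|X Δ M| = m` where `M = {1,…,m}`. -/
def sector (N m : ℕ) : Finset (Finset ℕ) :=
  (Finset.Icc 1 N).powerset.filter fun X => (X ∆ Finset.Icc 1 m).card = m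

/-- Extend a family of coefficients by setting `e(∅) := 1`. -/
def kext (e : Finset ℕ → ℝ) : Finset ℕ → ℝ := fun X => if X = ∅ then 1 else e X

/-- The kink fixed-point map `F(E, e) = (E′, e′)`, where `E′ = 2ε·e({m,m+1})` and, for
nonempty `X` with `X:m`,
`e′(X) = (λ(X)−2)⁻¹·[−2ε·Σ_{⟨j,j+1⟩ ∈ ∂(X Δ M)} e(X Δ {j,j+1}) + E·e(X)]`
(with the convention `e(∅) = 1`); all other components are set to `0`. -/
noncomputable def kinkF (N m : ℕ) (ε A B : ℝ) (p : ℝ × (Finset ℕ → ℝ)) : ℝ × (Finset ℕ → ℝ) :=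
  (2 * ε * p.2 {m, m + 1},
    fun X =>
      if X ∈ sector N m ∧ X ≠ ∅ then
        (lam N m A B X - 2)⁻¹ *
          (-2 * ε * ∑ j ∈ bdry N (X ∆ Finset.Icc 1 m), kext p.2 (X ∆ {j, j + 1})
            + p.1 * p.2 X)
      else 0)

/-- The norm `‖(E, e)‖ = |E| + Σ_{X:m, X ≠ ∅} (λ(X)−2)·|e(X)|`. -/
def knorm (N m : ℕ) (A B : ℝ) (p : ℝ × (Finset ℕ → ℝ)) : ℝ :=
  |p.1| + ∑ X ∈ (sector N m).filter (· ≠ ∅), (lam N m A B X - 2) * |p.2 X|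

lemma pair_card_symmDiff (m j : ℕ) (hm : 2 ≤ m) (hj : 1 ≤ j)
    (h : (({j, j+1} : Finset ℕ) ∆ Finset.Icc 1 m).card = m) : j = m := by
  rcases lt_trichotomy j m with hlt | heq | hgt
  · have hset : ({j, j+1} : Finset ℕ) ∆ Finset.Icc 1 m = Finset.Icc 1 m \ {j, j+1} := by
      ext k
      simp [Finset.mem_symmDiff, Finset.mem_Icc, Finset.mem_sdiff]
      omega
    have hsub : ({j, j+1} : Finset ℕ) ⊆ Finset.Icc 1 m := by
      intro k hk
      simp only [Finset.mem_insert, Finset.mem_singleton] at hk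
      simp only [Finset.mem_Icc]; omega
    have hc2 : ({j, j+1} : Finset ℕ).card = 2 := by
      rw [Finset.card_insert_of_notMem (by simp), Finset.card_singleton]
    rw [hset, Finset.card_sdiff_of_subset hsub, hc2, Nat.card_Icc] at h
    omega
  · exact heq
  · have hset : ({j, j+1} : Finset ℕ) ∆ Finset.Icc 1 m
        = insert j (insert (j+1) (Finset.Icc 1 m)) := by
      ext k
      simp [Finset.mem_symmDiff, Finset.mem_Icc, Finset.mem_insert]
      omega
    rw [hset, Finset.card_insert_of_notMem (by simp [Finset.mem_Icc]; omega),
      Finset.card_insert_of_notMem (by simp [Finset.mem_Icc]; omega), Nat.card_Icc] at h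
    omega

theorem kinkF_zero (N m : ℕ) (ε A B : ℝ) (hA : 1 ≤ A) (hB : 1 ≤ B)
    (hm : 2 ≤ m) (hmN : m + 2 ≤ N) :
    (kinkF N m ε A B (0, fun _ => 0)).1 = 0 ∧
      (kinkF N m ε A B (0, fun _ => 0)).2 {m, m + 1} = -ε / 2 ∧
      (∀ X : Finset ℕ, X ≠ {m, m + 1} → (kinkF N m ε A B (0, fun _ => 0)).2 X = 0) ∧
      knorm N m A B (kinkF N m ε A B (0, fun _ => 0)) = 2 * |ε| := by
  -- basic set identities
  have hD : ({m, m+1} : Finset ℕ) ∆ Finset.Icc 1 m = insert (m+1) (Finset.Icc 1 (m-1)) := by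
    ext j
    simp [Finset.mem_symmDiff, Finset.mem_insert, Finset.mem_Icc]
    omega
  have hbd : bdry N (({m, m+1} : Finset ℕ) ∆ Finset.Icc 1 m) = {m-1, m, m+1} := by
    rw [hD]
    ext j
    simp [bdry, Finset.mem_filter, Finset.mem_Icc, Finset.mem_insert]
    omega
  have hDcard : (({m, m+1} : Finset ℕ) ∆ Finset.Icc 1 m).card = m := by
    rw [hD, Finset.card_insert_of_notMem (by simp [Finset.mem_Icc]), Nat.card_Icc]
    omega
  have hsec : ({m, m+1} : Finset ℕ) ∈ sector N m := by
    simp only [sector, Finset.mem_filter, Finset.mem_powerset]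
    refine ⟨?_, hDcard⟩
    intro k hk
    simp only [Finset.mem_insert, Finset.mem_singleton] at hk
    simp only [Finset.mem_Icc]; omega
  have hne : ({m, m+1} : Finset ℕ) ≠ ∅ := by
    simp
  have hbdcard : ({m-1, m, m+1} : Finset ℕ).card = 3 := by
    rw [Finset.card_insert_of_notMem (by simp only [Finset.mem_insert, Finset.mem_singleton]; omega),
      Finset.card_insert_of_notMem (by simp only [Finset.mem_singleton]; omega), Finset.card_singleton]
  have hlam : lam N m A B {m, m+1} = 6 := by
    rw [lam, hbd, hbdcard]
    rw [if_neg (by simp; omega), if_neg (by simp; omega)]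
    norm_num
  -- third item (used also for the norm)
  have hzero : ∀ X : Finset ℕ, X ≠ {m, m + 1} →
      (kinkF N m ε A B (0, fun _ => 0)).2 X = 0 := by
    intro X hX
    simp only [kinkF]
    split_ifs with h
    · obtain ⟨hXs, hXne⟩ := h
      have hXcard : (X ∆ Finset.Icc 1 m).card = m := by
        simp only [sector, Finset.mem_filter] at hXs
        exact hXs.2
      have hsum : ∑ j ∈ bdry N (X ∆ Finset.Icc 1 m),
          kext (fun _ => 0) (X ∆ {j, j + 1}) = 0 := by
        apply Finset.sum_eq_zero
        intro j hj
        have hj1 : 1 ≤ j := by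
          simp only [bdry, Finset.mem_filter, Finset.mem_Icc] at hj
          exact hj.1.1
        have hXne' : X ∆ {j, j+1} ≠ ∅ := by
          intro hEq
          have hXeq : X = {j, j+1} :=
            symmDiff_eq_bot.mp (by rw [hEq, Finset.bot_eq_empty])
          apply hX
          rw [hXeq]
          have := pair_card_symmDiff m j hm hj1 (hXeq ▸ hXcard)
          rw [this]
        simp [kext, hXne']
      rw [hsum]
      ring
    · rfl
  refine ⟨by simp [kinkF], ?_, hzero, ?_⟩
  · -- value at {m, m+1}
    simp only [kinkF]
    rw [if_pos ⟨hsec, hne⟩, hbd, hlam]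
    have h1 : m - 1 + 1 = m := by omega
    have hs1 : kext (fun _ => (0:ℝ)) (({m, m+1} : Finset ℕ) ∆ {m-1, m-1+1}) = 0 := by
      rw [h1]
      have : m + 1 ∈ ({m, m+1} : Finset ℕ) ∆ {m-1, m} := by
        simp [Finset.mem_symmDiff]; omega
      simp [kext, Finset.ne_empty_of_mem this]
    have hs2 : kext (fun _ => (0:ℝ)) (({m, m+1} : Finset ℕ) ∆ {m, m+1}) = 1 := by
      rw [symmDiff_self]
      simp [kext, Finset.bot_eq_empty]
    have hs3 : kext (fun _ => (0:ℝ)) (({m, m+1} : Finset ℕ) ∆ {m+1, m+1+1}) = 0 := by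
      have : m ∈ ({m, m+1} : Finset ℕ) ∆ {m+1, m+1+1} := by
        simp [Finset.mem_symmDiff]; omega
      simp [kext, Finset.ne_empty_of_mem this]
    rw [Finset.sum_insert (by simp only [Finset.mem_insert, Finset.mem_singleton]; omega), Finset.sum_insert (by simp only [Finset.mem_singleton]; omega),
      Finset.sum_singleton, hs1, hs2, hs3]
    ring
  · -- norm
    rw [knorm]
    have hE : (kinkF N m ε A B (0, fun _ => 0)).1 = 0 := by simp [kinkF]
    rw [hE, abs_zero, zero_add]
    rw [Finset.sum_eq_single_of_mem ({m, m+1} : Finset ℕ)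
      (Finset.mem_filter.2 ⟨hsec, hne⟩)
      (fun b _ hb => by rw [hzero b hb, abs_zero, mul_zero])]
    have hv : (kinkF N m ε A B (0, fun _ => 0)).2 {m, m+1} = -ε / 2 := by
      simp only [kinkF]
      rw [if_pos ⟨hsec, hne⟩, hbd, hlam]
      have h1 : m - 1 + 1 = m := by omega
      have hs1 : kext (fun _ => (0:ℝ)) (({m, m+1} : Finset ℕ) ∆ {m-1, m-1+1}) = 0 := by
        rw [h1]
        have : m + 1 ∈ ({m, m+1} : Finset ℕ) ∆ {m-1, m} := by
          simp [Finset.mem_symmDiff]; omega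
        simp [kext, Finset.ne_empty_of_mem this]
      have hs2 : kext (fun _ => (0:ℝ)) (({m, m+1} : Finset ℕ) ∆ {m, m+1}) = 1 := by
        rw [symmDiff_self]
        simp [kext, Finset.bot_eq_empty]
      have hs3 : kext (fun _ => (0:ℝ)) (({m, m+1} : Finset ℕ) ∆ {m+1, m+1+1}) = 0 := by
        have : m ∈ ({m, m+1} : Finset ℕ) ∆ {m+1, m+1+1} := by
          simp [Finset.mem_symmDiff]; omega
        simp [kext, Finset.ne_empty_of_mem this]
      rw [Finset.sum_insert (by simp only [Finset.mem_insert, Finset.mem_singleton]; omega), Finset.sum_insert (by simp only [Finset.mem_singleton]; omega),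
        Finset.sum_singleton, hs1, hs2, hs3]
      ring
    rw [hv, hlam, abs_div, abs_neg]
    simp [abs_of_nonneg]
    ring
end

section
/- Assume A ≥ 1 and B ≥ 1. Then for all pairs (E, e) and (E′, e′) of finite norm, ‖F(E, e) − F(E′, e′)‖ ≤ (3|ε| + (1/4)·max{‖(E, e)‖, ‖(E′, e′)‖}) · ‖(E, e) − (E′, e′)‖. Consequently, for δ > 0 and ε with 3|ε| + δ/4 < 1, F is a contraction on the closed ball of radius δ about the origin. -/
open Finset
open scoped symmDiff

section Aux
variable {N m : ℕ}

lemma mem_sector_iff {X : Finset ℕ} :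
    X ∈ sector N m ↔ X ⊆ Finset.Icc 1 N ∧ (X ∆ Finset.Icc 1 m).card = m := by
  simp [sector]

lemma mem_bdry_iff {Y : Finset ℕ} {j : ℕ} :
    j ∈ bdry N Y ↔ (1 ≤ j ∧ j ≤ N - 1) ∧ ((j ∈ Y ∧ j + 1 ∉ Y) ∨ (j ∉ Y ∧ j + 1 ∈ Y)) := by
  simp [bdry, Finset.mem_Icc]

lemma exists_flip (Y : Finset ℕ) : ∀ d a : ℕ, ¬((a ∈ Y) ↔ (a + d ∈ Y)) →
    ∃ j, a ≤ j ∧ j < a + d ∧ ((j ∈ Y ∧ j + 1 ∉ Y) ∨ (j ∉ Y ∧ j + 1 ∈ Y)) := by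
  intro d
  induction d with
  | zero => intro a h; simp at h
  | succ d ih =>
    intro a h
    by_cases hfa : (a ∈ Y) ↔ (a + 1 ∈ Y)
    · obtain ⟨j, h1, h2, h3⟩ := ih (a + 1) (by rw [show a + 1 + d = a + (d + 1) by omega]; tauto)
      exact ⟨j, by omega, by omega, h3⟩
    · exact ⟨a, le_refl _, by omega, by tauto⟩

lemma flip_in_bdry (N : ℕ) {Y : Finset ℕ} (a b : ℕ) (ha : 1 ≤ a) (hb : b ≤ N) (hab : a ≤ b)
    (h : ¬((a ∈ Y) ↔ (b ∈ Y))) : ∃ j ∈ bdry N Y, a ≤ j ∧ j < b := by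
  obtain ⟨j, h1, h2, h3⟩ := exists_flip Y (b - a) a
    (by rw [show a + (b - a) = b by omega]; exact h)
  exact ⟨j, mem_bdry_iff.mpr ⟨⟨by omega, by omega⟩, h3⟩, by omega, by omega⟩

lemma two_le_card_of_two_mem {s : Finset ℕ} {j1 j2 : ℕ} (h1 : j1 ∈ s) (h2 : j2 ∈ s)
    (h12 : j1 < j2) : 2 ≤ s.card := by
  have hsub : ({j1, j2} : Finset ℕ) ⊆ s := by
    intro k hk; simp only [Finset.mem_insert, Finset.mem_singleton] at hk
    rcases hk with rfl | rfl <;> assumption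
  calc 2 = ({j1, j2} : Finset ℕ).card := (Finset.card_pair (by omega)).symm
    _ ≤ s.card := Finset.card_le_card hsub

lemma three_le_card_of_three_mem {s : Finset ℕ} {j1 j2 j3 : ℕ} (h1 : j1 ∈ s) (h2 : j2 ∈ s)
    (h3 : j3 ∈ s) (h12 : j1 < j2) (h23 : j2 < j3) : 3 ≤ s.card := by
  have hsub : ({j1, j2, j3} : Finset ℕ) ⊆ s := by
    intro k hk
    simp only [Finset.mem_insert, Finset.mem_singleton] at hk
    rcases hk with rfl | rfl | rfl <;> assumption
  have hcard : ({j1, j2, j3} : Finset ℕ).card = 3 := by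
    rw [Finset.card_insert_of_notMem (by simp only [Finset.mem_insert, Finset.mem_singleton]; omega),
      Finset.card_pair (by omega)]
  calc 3 = ({j1, j2, j3} : Finset ℕ).card := hcard.symm
    _ ≤ s.card := Finset.card_le_card hsub

lemma bdry_card_cases (hm : 0 < m) (hmN : m < N) {Y : Finset ℕ}
    (hY : Y ⊆ Finset.Icc 1 N) (hcard : Y.card = m) (hYM : Y ≠ Finset.Icc 1 m) :
    (1 ∈ Y ∧ N ∉ Y ∧ 3 ≤ (bdry N Y).card) ∨
    (1 ∈ Y ∧ N ∈ Y ∧ 2 ≤ (bdry N Y).card) ∨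
    (1 ∉ Y ∧ N ∈ Y ∧ 1 ≤ (bdry N Y).card) ∨
    (1 ∉ Y ∧ N ∉ Y ∧ 2 ≤ (bdry N Y).card) := by
  have hN1 : 1 ≤ N := by omega
  by_cases h1 : 1 ∈ Y <;> by_cases hN : N ∈ Y
  · -- 1 ∈ Y, N ∈ Y : b ≥ 2
    refine Or.inr (Or.inl ⟨h1, hN, ?_⟩)
    have hne : Y ≠ Finset.Icc 1 N := by
      intro h; rw [h, Nat.card_Icc] at hcard; omega
    obtain ⟨c, hc1, hc2⟩ := Finset.exists_of_ssubset (hY.ssubset_of_ne hne)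
    rw [Finset.mem_Icc] at hc1
    have hc1' : c ≠ 1 := fun h => hc2 (h ▸ h1)
    have hcN : c ≠ N := fun h => hc2 (h ▸ hN)
    obtain ⟨j1, hj1, _, hj1c⟩ := flip_in_bdry N (Y := Y) 1 c (le_refl 1) (by omega) (by omega) (by tauto)
    obtain ⟨j2, hj2, hj2c, _⟩ := flip_in_bdry N (Y := Y) c N (by omega) (le_refl N) (by omega) (by tauto)
    exact two_le_card_of_two_mem hj1 hj2 (by omega)
  · -- 1 ∈ Y, N ∉ Y : b ≥ 3
    refine Or.inl ⟨h1, hN, ?_⟩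
    have hMcard : (Finset.Icc 1 m).card = m := by rw [Nat.card_Icc]; omega
    have hYnotsub : ¬ Y ⊆ Finset.Icc 1 m := by
      intro hsub
      exact hYM (Finset.eq_of_subset_of_card_le hsub (by omega))
    have hMnotsub : ¬ Finset.Icc 1 m ⊆ Y := by
      intro hsub
      exact hYM (Finset.eq_of_subset_of_card_le hsub (by omega)).symm
    obtain ⟨a, haY, haM⟩ := Finset.not_subset.mp hYnotsub
    obtain ⟨c, hcM, hcY⟩ := Finset.not_subset.mp hMnotsub
    rw [Finset.mem_Icc] at haM hcM
    have haN : a ∈ Finset.Icc 1 N := hY haY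
    rw [Finset.mem_Icc] at haN
    have hma : m < a := by omega
    have hc1 : c ≠ 1 := fun h => hcY (h ▸ h1)
    have haNlt : a < N := by
      rcases lt_or_eq_of_le haN.2 with h | h
      · exact h
      · exact absurd (h ▸ haY) hN
    obtain ⟨j1, hj1, _, hj1c⟩ := flip_in_bdry N (Y := Y) 1 c (le_refl 1) (by omega) (by omega) (by tauto)
    obtain ⟨j2, hj2, hj2a, hj2b⟩ := flip_in_bdry N (Y := Y) c a (by omega) (by omega) (by omega) (by tauto)
    obtain ⟨j3, hj3, hj3a, _⟩ := flip_in_bdry N (Y := Y) a N (by omega) (le_refl N) (by omega) (by tauto)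
    exact three_le_card_of_three_mem hj1 hj2 hj3 (by omega) (by omega)
  · -- 1 ∉ Y, N ∈ Y : b ≥ 1
    refine Or.inr (Or.inr (Or.inl ⟨h1, hN, ?_⟩))
    obtain ⟨j, hj, _, _⟩ := flip_in_bdry N (Y := Y) 1 N (le_refl 1) (le_refl N) hN1 (by tauto)
    exact Finset.card_pos.mpr ⟨j, hj⟩
  · -- 1 ∉ Y, N ∉ Y : b ≥ 2
    refine Or.inr (Or.inr (Or.inr ⟨h1, hN, ?_⟩))
    have hYne : Y.Nonempty := Finset.card_pos.mp (by omega)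
    obtain ⟨a, haY⟩ := hYne
    have haN : a ∈ Finset.Icc 1 N := hY haY
    rw [Finset.mem_Icc] at haN
    have ha1 : a ≠ 1 := fun h => h1 (h ▸ haY)
    have haNne : a ≠ N := fun h => hN (h ▸ haY)
    obtain ⟨j1, hj1, _, hj1a⟩ := flip_in_bdry N (Y := Y) 1 a (le_refl 1) (by omega) (by omega) (by tauto)
    obtain ⟨j2, hj2, hj2a, _⟩ := flip_in_bdry N (Y := Y) a N (by omega) (le_refl N) (by omega) (by tauto)
    exact two_le_card_of_two_mem hj1 hj2 (by omega)

end Aux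

section Aux2
variable {N m : ℕ} {A B : ℝ}

lemma sector_facts (hm : 0 < m) (hmN : m < N) {X : Finset ℕ}
    (hX : X ∈ sector N m) (hne : X ≠ ∅) :
    (X ∆ Finset.Icc 1 m) ⊆ Finset.Icc 1 N ∧ (X ∆ Finset.Icc 1 m).card = m ∧
      (X ∆ Finset.Icc 1 m) ≠ Finset.Icc 1 m ∧
      ((1 ∈ X) ↔ (1 ∉ X ∆ Finset.Icc 1 m)) ∧ ((N ∈ X) ↔ (N ∈ X ∆ Finset.Icc 1 m)) := by
  obtain ⟨hsub, hcard⟩ := mem_sector_iff.mp hX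
  have h1M : 1 ∈ Finset.Icc 1 m := by rw [Finset.mem_Icc]; omega
  have hNM : N ∉ Finset.Icc 1 m := by rw [Finset.mem_Icc]; omega
  refine ⟨?_, hcard, ?_, ?_, ?_⟩
  · intro k hk
    rw [Finset.mem_symmDiff] at hk
    rcases hk with ⟨h, _⟩ | ⟨h, _⟩
    · exact hsub h
    · rw [Finset.mem_Icc] at h ⊢; omega
  · intro h
    have h2 : X ∆ Finset.Icc 1 m ∆ Finset.Icc 1 m = Finset.Icc 1 m ∆ Finset.Icc 1 m := by rw [h]
    rw [symmDiff_symmDiff_cancel_right, symmDiff_self] at h2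
    exact hne h2
  · rw [Finset.mem_symmDiff]; tauto
  · rw [Finset.mem_symmDiff]; tauto

lemma lam_sub_two_ge (hm : 0 < m) (hmN : m < N) (hA : 1 ≤ A) (hB : 1 ≤ B) {X : Finset ℕ}
    (hX : X ∈ sector N m) (hne : X ≠ ∅) : 4 ≤ lam N m A B X - 2 := by
  obtain ⟨hYsub, hYcard, hYM, h1X, hNX⟩ := sector_facts hm hmN hX hne
  rcases bdry_card_cases hm hmN hYsub hYcard hYM with ⟨h1, hN, hb⟩ | ⟨h1, hN, hb⟩ |
    ⟨h1, hN, hb⟩ | ⟨h1, hN, hb⟩ <;>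
    unfold lam
  · rw [if_neg (by tauto), if_neg (by tauto)]
    have : (3 : ℝ) ≤ ((bdry N (X ∆ Finset.Icc 1 m)).card : ℝ) := by exact_mod_cast hb
    linarith
  · rw [if_neg (by tauto), if_pos (by tauto)]
    have : (2 : ℝ) ≤ ((bdry N (X ∆ Finset.Icc 1 m)).card : ℝ) := by exact_mod_cast hb
    linarith
  · rw [if_pos (by tauto), if_pos (by tauto)]
    have : (1 : ℝ) ≤ ((bdry N (X ∆ Finset.Icc 1 m)).card : ℝ) := by exact_mod_cast hb
    linarith
  · rw [if_pos (by tauto), if_neg (by tauto)]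
    have : (2 : ℝ) ≤ ((bdry N (X ∆ Finset.Icc 1 m)).card : ℝ) := by exact_mod_cast hb
    linarith

lemma bdry_card_le_lam (hm : 0 < m) (hmN : m < N) (hA : 1 ≤ A) (hB : 1 ≤ B) {X : Finset ℕ}
    (hX : X ∈ sector N m) (hne : X ≠ ∅) :
    ((bdry N (X ∆ Finset.Icc 1 m)).card : ℝ) ≤ lam N m A B X - 2 := by
  have h4 := lam_sub_two_ge hm hmN hA hB hX hne
  have hs1 : (0 : ℝ) ≤ 2 * A * (if 1 ∈ X then 1 else 0) := by split_ifs <;> nlinarith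
  have hs2 : (0 : ℝ) ≤ 2 * B * (if N ∈ X then 1 else 0) := by split_ifs <;> nlinarith
  rcases le_or_gt 2 (bdry N (X ∆ Finset.Icc 1 m)).card with h | h
  · have : (2 : ℝ) ≤ ((bdry N (X ∆ Finset.Icc 1 m)).card : ℝ) := by exact_mod_cast h
    unfold lam at h4 ⊢; linarith
  · have : ((bdry N (X ∆ Finset.Icc 1 m)).card : ℝ) ≤ 1 := by
      have : (bdry N (X ∆ Finset.Icc 1 m)).card ≤ 1 := by omega
      exact_mod_cast this
    linarith

lemma pairM_mem (hm : 0 < m) (hmN : m < N) : ({m, m + 1} : Finset ℕ) ∈ sector N m := by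
  refine mem_sector_iff.mpr ⟨?_, ?_⟩
  · intro k hk
    simp only [Finset.mem_insert, Finset.mem_singleton] at hk
    rw [Finset.mem_Icc]; omega
  · have h : ({m, m + 1} : Finset ℕ) ∆ Finset.Icc 1 m = insert (m + 1) (Finset.Icc 1 (m - 1)) := by
      ext k
      simp only [Finset.mem_symmDiff, Finset.mem_insert, Finset.mem_singleton, Finset.mem_Icc]
      omega
    rw [h, Finset.card_insert_of_notMem (by rw [Finset.mem_Icc]; omega), Nat.card_Icc]
    omega

lemma card_symmDiff_pair {Y : Finset ℕ} {j : ℕ}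
    (h : (j ∈ Y ∧ j + 1 ∉ Y) ∨ (j ∉ Y ∧ j + 1 ∈ Y)) :
    (Y ∆ {j, j + 1}).card = Y.card := by
  rcases h with ⟨h1, h2⟩ | ⟨h1, h2⟩
  · have he : Y ∆ {j, j + 1} = insert (j + 1) (Y.erase j) := by
      ext k
      by_cases hky : k ∈ Y <;> by_cases hk : k = j <;> by_cases hk2 : k = j + 1 <;>
        simp_all [Finset.mem_symmDiff] <;> omega
    rw [he, Finset.card_insert_of_notMem (by simp [h2]), Finset.card_erase_of_mem h1]
    have := Finset.card_pos.mpr ⟨j, h1⟩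
    omega
  · have he : Y ∆ {j, j + 1} = insert j (Y.erase (j + 1)) := by
      ext k
      by_cases hky : k ∈ Y <;> by_cases hk : k = j <;> by_cases hk2 : k = j + 1 <;>
        simp_all [Finset.mem_symmDiff] <;> omega
    rw [he, Finset.card_insert_of_notMem (by simp [h1]), Finset.card_erase_of_mem h2]
    have := Finset.card_pos.mpr ⟨j + 1, h2⟩
    omega

lemma mem_bdry_flip {Y : Finset ℕ} {j : ℕ} (hj : j ∈ bdry N Y) :
    j ∈ bdry N (Y ∆ {j, j + 1}) := by
  obtain ⟨hIcc, hflip⟩ := mem_bdry_iff.mp hj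
  refine mem_bdry_iff.mpr ⟨hIcc, ?_⟩
  have hjm : j ∈ Y ∆ {j, j + 1} ↔ j ∉ Y := by
    simp [Finset.mem_symmDiff]
  have hj1m : j + 1 ∈ Y ∆ {j, j + 1} ↔ j + 1 ∉ Y := by
    simp [Finset.mem_symmDiff]
  tauto

lemma flip_mem_sector {X : Finset ℕ} {j : ℕ} (hX : X ∈ sector N m)
    (hj : j ∈ bdry N (X ∆ Finset.Icc 1 m)) : X ∆ {j, j + 1} ∈ sector N m := by
  obtain ⟨hsub, hcard⟩ := mem_sector_iff.mp hX
  obtain ⟨⟨hj1, hj2⟩, hflip⟩ := mem_bdry_iff.mp hj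
  refine mem_sector_iff.mpr ⟨?_, ?_⟩
  · intro k hk
    rw [Finset.mem_symmDiff] at hk
    rcases hk with ⟨h, _⟩ | ⟨h, _⟩
    · exact hsub h
    · simp only [Finset.mem_insert, Finset.mem_singleton] at h
      rw [Finset.mem_Icc]; omega
  · rw [symmDiff_right_comm, card_symmDiff_pair hflip, hcard]

lemma flip_mem_bdry {X : Finset ℕ} {j : ℕ}
    (hj : j ∈ bdry N (X ∆ Finset.Icc 1 m)) :
    j ∈ bdry N ((X ∆ {j, j + 1}) ∆ Finset.Icc 1 m) := by
  rw [symmDiff_right_comm]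
  exact mem_bdry_flip hj

end Aux2

section Main
variable {N m : ℕ} {A B : ℝ}

/-- Reindexing the double boundary sum. -/
lemma sum_flip_le (hm : 0 < m) (hmN : m < N) (hA : 1 ≤ A) (hB : 1 ≤ B)
    (v : Finset ℕ → ℝ) (hv : v ∅ = 0) :
    ∑ X ∈ (sector N m).filter (· ≠ ∅), ∑ j ∈ bdry N (X ∆ Finset.Icc 1 m), |v (X ∆ {j, j + 1})|
      ≤ ∑ X ∈ (sector N m).filter (· ≠ ∅), (lam N m A B X - 2) * |v X| := by
  have step1 : ∑ X ∈ (sector N m).filter (· ≠ ∅),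
        ∑ j ∈ bdry N (X ∆ Finset.Icc 1 m), |v (X ∆ {j, j + 1})|
      ≤ ∑ X ∈ sector N m, ∑ j ∈ bdry N (X ∆ Finset.Icc 1 m), |v (X ∆ {j, j + 1})| :=
    Finset.sum_le_sum_of_subset_of_nonneg (Finset.filter_subset _ _)
      (fun X _ _ => Finset.sum_nonneg fun j _ => abs_nonneg _)
  have step2 : ∑ X ∈ sector N m, ∑ j ∈ bdry N (X ∆ Finset.Icc 1 m), |v (X ∆ {j, j + 1})|
      = ∑ X ∈ sector N m, ∑ j ∈ bdry N (X ∆ Finset.Icc 1 m), |v X| := by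
    rw [Finset.sum_sigma', Finset.sum_sigma']
    refine Finset.sum_nbij' (fun x => ⟨x.1 ∆ {x.2, x.2 + 1}, x.2⟩)
      (fun x => ⟨x.1 ∆ {x.2, x.2 + 1}, x.2⟩) ?_ ?_ ?_ ?_ ?_
    · rintro ⟨X, j⟩ hx
      rw [Finset.mem_sigma] at hx ⊢
      exact ⟨flip_mem_sector hx.1 hx.2, flip_mem_bdry hx.2⟩
    · rintro ⟨X, j⟩ hx
      rw [Finset.mem_sigma] at hx ⊢
      exact ⟨flip_mem_sector hx.1 hx.2, flip_mem_bdry hx.2⟩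
    · rintro ⟨X, j⟩ _
      simp [symmDiff_symmDiff_cancel_right]
    · rintro ⟨X, j⟩ _
      simp [symmDiff_symmDiff_cancel_right]
    · rintro ⟨X, j⟩ _
      rfl
  have step3 : ∑ X ∈ sector N m, ∑ j ∈ bdry N (X ∆ Finset.Icc 1 m), |v X|
      = ∑ X ∈ sector N m, ((bdry N (X ∆ Finset.Icc 1 m)).card : ℝ) * |v X| := by
    refine Finset.sum_congr rfl fun X _ => ?_
    rw [Finset.sum_const, nsmul_eq_mul]
  have step4 : ∑ X ∈ sector N m, ((bdry N (X ∆ Finset.Icc 1 m)).card : ℝ) * |v X|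
      ≤ ∑ X ∈ sector N m, (if X ≠ ∅ then (lam N m A B X - 2) * |v X| else 0) := by
    refine Finset.sum_le_sum fun X hX => ?_
    by_cases hX0 : X = ∅
    · simp [hX0, hv]
    · rw [if_pos hX0]
      exact mul_le_mul_of_nonneg_right (bdry_card_le_lam hm hmN hA hB hX hX0) (abs_nonneg _)
  calc _ ≤ _ := step1
    _ = _ := step2
    _ = _ := step3
    _ ≤ _ := step4
    _ = _ := (Finset.sum_filter _ _).symm

set_option maxHeartbeats 1000000 in
theorem kinkF_contraction (N m : ℕ) (hm : 0 < m) (hmN : m < N)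
    (ε A B : ℝ) (hA : 1 ≤ A) (hB : 1 ≤ B) :
    (∀ p q : ℝ × (Finset ℕ → ℝ),
        knorm N m A B (kinkF N m ε A B p - kinkF N m ε A B q)
          ≤ (3 * |ε| + (1 / 4) * max (knorm N m A B p) (knorm N m A B q))
              * knorm N m A B (p - q)) ∧
      ∀ δ : ℝ, 0 < δ → 3 * |ε| + δ / 4 < 1 →
        ∀ p q : ℝ × (Finset ℕ → ℝ), knorm N m A B p ≤ δ → knorm N m A B q ≤ δ →
          knorm N m A B (kinkF N m ε A B p - kinkF N m ε A B q)
            ≤ (3 * |ε| + δ / 4) * knorm N m A B (p - q) := by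
  have key : ∀ p q : ℝ × (Finset ℕ → ℝ),
      knorm N m A B (kinkF N m ε A B p - kinkF N m ε A B q)
        ≤ (3 * |ε| + (1 / 4) * max (knorm N m A B p) (knorm N m A B q))
            * knorm N m A B (p - q) := by
    intro p q
    set S' := (sector N m).filter (· ≠ ∅) with hS'def
    have hlam : ∀ X ∈ S', 4 ≤ lam N m A B X - 2 := fun X hX => by
      have h := Finset.mem_filter.mp hX
      exact lam_sub_two_ge hm hmN hA hB h.1 h.2
    set K := max (knorm N m A B p) (knorm N m A B q) with hK
    set Sd := ∑ X ∈ S', (lam N m A B X - 2) * |p.2 X - q.2 X| with hSd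
    set Sq := ∑ X ∈ S', (lam N m A B X - 2) * |q.2 X| with hSq
    set Ad := ∑ X ∈ S', |p.2 X - q.2 X| with hAd
    set Aq := ∑ X ∈ S', |q.2 X| with hAq
    -- basic nonnegativity / norm facts
    have hSd0 : 0 ≤ Sd := Finset.sum_nonneg fun X hX =>
      mul_nonneg (by linarith [hlam X hX]) (abs_nonneg _)
    have hAd0 : 0 ≤ Ad := Finset.sum_nonneg fun X _ => abs_nonneg _
    have hAq0 : 0 ≤ Aq := Finset.sum_nonneg fun X _ => abs_nonneg _
    have hDval : knorm N m A B (p - q) = |p.1 - q.1| + Sd := by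
      unfold knorm
      rw [Prod.fst_sub, Prod.snd_sub]
      simp only [Pi.sub_apply]
      rfl
    have hp1K : |p.1| ≤ K := by
      have : |p.1| ≤ knorm N m A B p := by
        unfold knorm
        have : (0:ℝ) ≤ ∑ X ∈ S', (lam N m A B X - 2) * |p.2 X| :=
          Finset.sum_nonneg fun X hX => mul_nonneg (by linarith [hlam X hX]) (abs_nonneg _)
        linarith
      exact this.trans (le_max_left _ _)
    have hSqK : Sq ≤ K := by
      have : Sq ≤ knorm N m A B q := by
        unfold knorm; have := abs_nonneg q.1; linarith
      exact this.trans (le_max_right _ _)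
    have hK0 : 0 ≤ K := le_trans (abs_nonneg p.1) hp1K
    have h4Ad : 4 * Ad ≤ Sd := by
      rw [hAd, hSd, Finset.mul_sum]
      refine Finset.sum_le_sum fun X hX => ?_
      exact mul_le_mul_of_nonneg_right (by linarith [hlam X hX]) (abs_nonneg _)
    have h4Aq : 4 * Aq ≤ Sq := by
      rw [hAq, hSq, Finset.mul_sum]
      refine Finset.sum_le_sum fun X hX => ?_
      exact mul_le_mul_of_nonneg_right (by linarith [hlam X hX]) (abs_nonneg _)
    -- the E-component
    have hM' : ({m, m + 1} : Finset ℕ) ∈ S' := Finset.mem_filter.mpr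
      ⟨pairM_mem hm hmN, by
        intro h
        have : m ∈ ({m, m + 1} : Finset ℕ) := by simp
        rw [h] at this
        exact absurd this (Finset.notMem_empty m)⟩
    have hEterm : |(kinkF N m ε A B p - kinkF N m ε A B q).1| ≤ |ε| * Sd := by
      have h1 : (kinkF N m ε A B p - kinkF N m ε A B q).1
          = 2 * ε * (p.2 {m, m + 1} - q.2 {m, m + 1}) := by
        rw [Prod.fst_sub]; simp only [kinkF]; ring
      rw [h1]
      have h2 : |2 * ε * (p.2 {m, m + 1} - q.2 {m, m + 1})|
          = 2 * |ε| * |p.2 {m, m + 1} - q.2 {m, m + 1}| := by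
        rw [abs_mul, abs_mul]; norm_num
      rw [h2]
      have hsingle : (lam N m A B {m, m + 1} - 2) * |p.2 {m, m + 1} - q.2 {m, m + 1}| ≤ Sd := by
        refine Finset.single_le_sum (f := fun X => (lam N m A B X - 2) * |p.2 X - q.2 X|)
          (fun X hX => mul_nonneg (by linarith [hlam X hX]) (abs_nonneg _)) hM'
      have h4 := hlam _ hM'
      have t1 : |ε| * ((lam N m A B {m, m + 1} - 2) * |p.2 {m, m + 1} - q.2 {m, m + 1}|)
          ≤ |ε| * Sd := mul_le_mul_of_nonneg_left hsingle (abs_nonneg ε)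
      nlinarith [mul_nonneg (abs_nonneg ε) (abs_nonneg (p.2 {m, m + 1} - q.2 {m, m + 1}))]
    -- the e-component
    have hsum : ∑ X ∈ S', (lam N m A B X - 2) * |(kinkF N m ε A B p - kinkF N m ε A B q).2 X|
        ≤ 2 * |ε| * Sd + |p.1| * Ad + |p.1 - q.1| * Aq := by
      have hterm : ∀ X ∈ S', (lam N m A B X - 2) * |(kinkF N m ε A B p - kinkF N m ε A B q).2 X|
          ≤ 2 * |ε| * (∑ j ∈ bdry N (X ∆ Finset.Icc 1 m),
              |kext p.2 (X ∆ {j, j + 1}) - kext q.2 (X ∆ {j, j + 1})|)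
            + (|p.1| * |p.2 X - q.2 X| + |p.1 - q.1| * |q.2 X|) := by
        intro X hX
        have hmem := Finset.mem_filter.mp hX
        have hcond : X ∈ sector N m ∧ X ≠ ∅ := ⟨hmem.1, hmem.2⟩
        have h4 := hlam X hX
        have hpos : 0 < lam N m A B X - 2 := by linarith
        have hfx : (kinkF N m ε A B p - kinkF N m ε A B q).2 X
            = (lam N m A B X - 2)⁻¹ *
              (-2 * ε * (∑ j ∈ bdry N (X ∆ Finset.Icc 1 m),
                  (kext p.2 (X ∆ {j, j + 1}) - kext q.2 (X ∆ {j, j + 1})))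
                + (p.1 * p.2 X - q.1 * q.2 X)) := by
          rw [Prod.snd_sub, Pi.sub_apply]
          simp only [kinkF]
          rw [if_pos hcond, if_pos hcond, Finset.sum_sub_distrib]
          ring
        rw [hfx, abs_mul, abs_inv, abs_of_pos hpos, ← mul_assoc,
          mul_inv_cancel₀ (ne_of_gt hpos), one_mul]
        calc |(-2) * ε * (∑ j ∈ bdry N (X ∆ Finset.Icc 1 m),
                (kext p.2 (X ∆ {j, j + 1}) - kext q.2 (X ∆ {j, j + 1})))
              + (p.1 * p.2 X - q.1 * q.2 X)|
            ≤ |(-2) * ε * (∑ j ∈ bdry N (X ∆ Finset.Icc 1 m),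
                (kext p.2 (X ∆ {j, j + 1}) - kext q.2 (X ∆ {j, j + 1})))|
              + |p.1 * p.2 X - q.1 * q.2 X| := abs_add_le _ _
          _ ≤ 2 * |ε| * (∑ j ∈ bdry N (X ∆ Finset.Icc 1 m),
                |kext p.2 (X ∆ {j, j + 1}) - kext q.2 (X ∆ {j, j + 1})|)
              + (|p.1| * |p.2 X - q.2 X| + |p.1 - q.1| * |q.2 X|) := by
            gcongr
            · rw [abs_mul, abs_mul]
              have h2 : |(-2 : ℝ)| = 2 := by norm_num
              rw [h2]
              exact mul_le_mul_of_nonneg_left (Finset.abs_sum_le_sum_abs _ _)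
                (by positivity)
            · have hsplit : p.1 * p.2 X - q.1 * q.2 X
                  = p.1 * (p.2 X - q.2 X) + (p.1 - q.1) * q.2 X := by ring
              rw [hsplit]
              calc |p.1 * (p.2 X - q.2 X) + (p.1 - q.1) * q.2 X|
                  ≤ |p.1 * (p.2 X - q.2 X)| + |(p.1 - q.1) * q.2 X| := abs_add_le _ _
                _ = |p.1| * |p.2 X - q.2 X| + |p.1 - q.1| * |q.2 X| := by
                    rw [abs_mul, abs_mul]
      calc ∑ X ∈ S', (lam N m A B X - 2) * |(kinkF N m ε A B p - kinkF N m ε A B q).2 X|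
          ≤ ∑ X ∈ S', (2 * |ε| * (∑ j ∈ bdry N (X ∆ Finset.Icc 1 m),
              |kext p.2 (X ∆ {j, j + 1}) - kext q.2 (X ∆ {j, j + 1})|)
            + (|p.1| * |p.2 X - q.2 X| + |p.1 - q.1| * |q.2 X|)) :=
            Finset.sum_le_sum hterm
        _ = 2 * |ε| * (∑ X ∈ S', ∑ j ∈ bdry N (X ∆ Finset.Icc 1 m),
              |kext p.2 (X ∆ {j, j + 1}) - kext q.2 (X ∆ {j, j + 1})|)
            + (|p.1| * Ad + |p.1 - q.1| * Aq) := by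
            rw [Finset.sum_add_distrib, Finset.sum_add_distrib, ← Finset.mul_sum,
              ← Finset.mul_sum, ← Finset.mul_sum]
        _ ≤ 2 * |ε| * Sd + (|p.1| * Ad + |p.1 - q.1| * Aq) := by
            have hv : (fun Z => kext p.2 Z - kext q.2 Z) ∅ = 0 := by simp [kext]
            have hle := sum_flip_le hm hmN hA hB (fun Z => kext p.2 Z - kext q.2 Z) hv
            have heq : ∑ X ∈ S', (lam N m A B X - 2) * |kext p.2 X - kext q.2 X| = Sd := by
              refine Finset.sum_congr rfl fun X hX => ?_
              have hne := (Finset.mem_filter.mp hX).2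
              simp only [kext, if_neg hne]
            rw [heq] at hle
            have := mul_le_mul_of_nonneg_left hle (by positivity : (0:ℝ) ≤ 2 * |ε|)
            linarith
        _ = 2 * |ε| * Sd + |p.1| * Ad + |p.1 - q.1| * Aq := by ring
    -- assemble
    have hknorm : knorm N m A B (kinkF N m ε A B p - kinkF N m ε A B q)
        = |(kinkF N m ε A B p - kinkF N m ε A B q).1|
          + ∑ X ∈ S', (lam N m A B X - 2) * |(kinkF N m ε A B p - kinkF N m ε A B q).2 X| := by
      unfold knorm
      rfl
    rw [hknorm, hDval]
    have e1 : |p.1| * Ad ≤ K * (Sd / 4) := by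
      have h1 : Ad ≤ Sd / 4 := by linarith
      exact mul_le_mul hp1K h1 hAd0 hK0
    have e2 : |p.1 - q.1| * Aq ≤ |p.1 - q.1| * (K / 4) := by
      have h1 : Aq ≤ K / 4 := by linarith
      exact mul_le_mul_of_nonneg_left h1 (abs_nonneg _)
    have hd10 : 0 ≤ |p.1 - q.1| := abs_nonneg _
    have heps0 : 0 ≤ |ε| := abs_nonneg _
    have expand : (3 * |ε| + 1 / 4 * K) * (|p.1 - q.1| + Sd)
        = 3 * |ε| * |p.1 - q.1| + 3 * |ε| * Sd + 1 / 4 * K * |p.1 - q.1| + 1 / 4 * K * Sd := by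
      ring
    nlinarith [hEterm, hsum, mul_nonneg heps0 hd10]
  refine ⟨key, ?_⟩
  intro δ hδ hδ1 p q hp hq
  have h1 := key p q
  have hmax : max (knorm N m A B p) (knorm N m A B q) ≤ δ := max_le hp hq
  have hD0 : 0 ≤ knorm N m A B (p - q) := by
    unfold knorm
    have h2 : (0:ℝ) ≤ ∑ X ∈ (sector N m).filter (· ≠ ∅), (lam N m A B X - 2) * |(p - q).2 X| := by
      refine Finset.sum_nonneg fun X hX => ?_
      have h := Finset.mem_filter.mp hX
      have := lam_sub_two_ge hm hmN hA hB h.1 h.2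
      exact mul_nonneg (by linarith) (abs_nonneg _)
    linarith [abs_nonneg (p - q).1]
  refine h1.trans ?_
  have : 3 * |ε| + 1 / 4 * max (knorm N m A B p) (knorm N m A B q) ≤ 3 * |ε| + δ / 4 := by
    linarith
  exact mul_le_mul_of_nonneg_right this hD0

end Main
end

section
/- There exist constants δ ∈ (0,1] and ε₀ > 0, independent of N, m, A and B, such that whenever A ≥ 1, B ≥ 1 and |ε| ≤ ε₀, there is exactly one pair (E, e) with ‖(E, e)‖ ≤ δ satisfying F(E, e) = (E, e). -/
open Finset
open scoped symmDiff

open scoped ENNReal NNReal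

namespace KinkProof

lemma ivt_down {P : ℕ → Prop} [DecidablePred P] :
    ∀ (b a : ℕ), a ≤ b → P a → ¬ P b → ∃ j, a ≤ j ∧ j < b ∧ P j ∧ ¬ P (j+1)
  | 0, a, hab, ha, hb => absurd ((Nat.le_zero.mp hab) ▸ ha) hb
  | (b+1), a, hab, ha, hb => by
    have hab' : a ≤ b := by
      rcases eq_or_lt_of_le hab with h | h
      · exact absurd (h ▸ ha) hb
      · omega
    by_cases hPb : P b
    · exact ⟨b, hab', Nat.lt_succ_self b, hPb, hb⟩
    · obtain ⟨j, h1, h2, h3, h4⟩ := ivt_down b a hab' ha hPb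
      exact ⟨j, h1, by omega, h3, h4⟩

lemma mem_bdry {N : ℕ} {Y : Finset ℕ} {j : ℕ} :
    j ∈ bdry N Y ↔ (1 ≤ j ∧ j ≤ N - 1) ∧ ((j ∈ Y ∧ j + 1 ∉ Y) ∨ (j ∉ Y ∧ j + 1 ∈ Y)) := by
  simp [bdry, Finset.mem_Icc]

lemma mem_sector {N m : ℕ} {X : Finset ℕ} :
    X ∈ sector N m ↔ X ⊆ Finset.Icc 1 N ∧ (X ∆ Finset.Icc 1 m).card = m := by
  simp [sector]

lemma empty_symmDiff' (M : Finset ℕ) : (∅ : Finset ℕ) ∆ M = M := bot_symmDiff M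

lemma empty_mem_sector {N m : ℕ} (hm : 0 < m) : (∅ : Finset ℕ) ∈ sector N m := by
  rw [mem_sector]
  refine ⟨Finset.empty_subset _, ?_⟩
  rw [empty_symmDiff', Nat.card_Icc]
  omega

lemma symmDiff_subset_Icc {N m : ℕ} (hmN : m < N) {X : Finset ℕ}
    (hX : X ⊆ Finset.Icc 1 N) : X ∆ Finset.Icc 1 m ⊆ Finset.Icc 1 N := by
  intro a ha
  rw [Finset.mem_symmDiff] at ha
  rcases ha with ⟨h1, _⟩ | ⟨h1, _⟩
  · exact hX h1
  · rw [Finset.mem_Icc] at h1 ⊢; omega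

lemma bdry_card_pos {N m : ℕ} (hm : 0 < m) (hmN : m < N) {X : Finset ℕ}
    (hX : X ∈ sector N m) : 1 ≤ (bdry N (X ∆ Finset.Icc 1 m)).card := by
  rw [mem_sector] at hX
  set Y := X ∆ Finset.Icc 1 m with hY
  have hYsub : Y ⊆ Finset.Icc 1 N := symmDiff_subset_Icc hmN hX.1
  have hcard : Y.card = m := hX.2
  obtain ⟨a, ha⟩ : Y.Nonempty := Finset.card_pos.mp (by omega)
  obtain ⟨b, hbI, hbY⟩ : ∃ b ∈ Finset.Icc 1 N, b ∉ Y := by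
    by_contra h
    push_neg at h
    have : Finset.Icc 1 N ⊆ Y := h
    have := Finset.card_le_card this
    rw [Nat.card_Icc] at this
    omega
  have haI := hYsub ha
  rw [Finset.mem_Icc] at haI hbI
  refine Finset.card_pos.mpr ?_
  rcases le_or_gt a b with hab | hab
  · obtain ⟨j, h1, h2, h3, h4⟩ := ivt_down (P := (· ∈ Y)) b a hab ha hbY
    exact ⟨j, mem_bdry.mpr ⟨⟨by omega, by omega⟩, Or.inl ⟨h3, h4⟩⟩⟩
  · obtain ⟨j, h1, h2, h3, h4⟩ := ivt_down (P := (· ∉ Y)) a b (le_of_lt hab) hbY (not_not.mpr ha)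
    exact ⟨j, mem_bdry.mpr ⟨⟨by omega, by omega⟩, Or.inr ⟨h3, not_not.mp h4⟩⟩⟩

lemma bdry_card_two {N m : ℕ} (hm : 0 < m) (hmN : m < N) {X : Finset ℕ}
    (hX : X ∈ sector N m) (hne : X ≠ ∅) (h1X : 1 ∉ X) (hNX : N ∉ X) :
    2 ≤ (bdry N (X ∆ Finset.Icc 1 m)).card := by
  rw [mem_sector] at hX
  set Y := X ∆ Finset.Icc 1 m with hY
  have hYsub : Y ⊆ Finset.Icc 1 N := symmDiff_subset_Icc hmN hX.1
  have h1Y : 1 ∈ Y := by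
    rw [hY, Finset.mem_symmDiff]
    exact Or.inr ⟨Finset.mem_Icc.mpr ⟨le_refl 1, hm⟩, h1X⟩
  have hNY : N ∉ Y := by
    rw [hY, Finset.mem_symmDiff]
    rintro (⟨h, _⟩ | ⟨h, _⟩)
    · exact hNX h
    · rw [Finset.mem_Icc] at h; omega
  obtain ⟨j₁, hj1a, hj1b, hj1c, hj1d⟩ :=
    ivt_down (P := (· ∈ Y)) N 1 (by omega) h1Y hNY
  have hYne : Y ≠ Finset.Icc 1 j₁ := by
    intro h
    have : Y.card = j₁ := by rw [h, Nat.card_Icc]; omega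
    have hjm : j₁ = m := by omega
    have : Y = Finset.Icc 1 m := by rw [h, hjm]
    have hXe : X = ∅ := by
      have := congrArg (fun Z => Z ∆ Finset.Icc 1 m) this
      simpa [hY, symmDiff_symmDiff_cancel_right, symmDiff_self] using this
    exact hne hXe
  obtain ⟨i, hi⟩ : ∃ i, ¬ (i ∈ Y ↔ i ∈ Finset.Icc 1 j₁) := by
    by_contra h
    push_neg at h
    exact hYne (Finset.ext fun i => h i)
  refine Finset.one_lt_card.mpr ?_
  by_cases hiY : i ∈ Y
  · have hiI : i ∉ Finset.Icc 1 j₁ := fun h => hi ⟨fun _ => h, fun _ => hiY⟩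
    have hi1 : 1 ≤ i := (Finset.mem_Icc.mp (hYsub hiY)).1
    have hiN : i ≤ N := (Finset.mem_Icc.mp (hYsub hiY)).2
    have hij : j₁ + 1 < i := by
      rw [Finset.mem_Icc] at hiI
      have : i ≠ j₁ + 1 := fun h => hj1d (h ▸ hiY)
      omega
    obtain ⟨j₂, h1, h2, h3, h4⟩ :=
      ivt_down (P := (· ∉ Y)) i (j₁ + 1) (by omega) hj1d (not_not.mpr hiY)
    refine ⟨j₁, mem_bdry.mpr ⟨⟨by omega, by omega⟩, Or.inl ⟨hj1c, hj1d⟩⟩,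
      j₂, mem_bdry.mpr ⟨⟨by omega, by omega⟩, Or.inr ⟨h3, not_not.mp h4⟩⟩, by omega⟩
  · have hiI : i ∈ Finset.Icc 1 j₁ := by
      by_contra h
      exact hi ⟨fun h' => absurd h' hiY, fun h' => absurd h' h⟩
    rw [Finset.mem_Icc] at hiI
    have hi1 : 2 ≤ i := by
      have : i ≠ 1 := fun h => hiY (h ▸ h1Y)
      omega
    obtain ⟨j₂, h1, h2, h3, h4⟩ :=
      ivt_down (P := (· ∈ Y)) i 1 (by omega) h1Y hiY
    refine ⟨j₁, mem_bdry.mpr ⟨⟨by omega, by omega⟩, Or.inl ⟨hj1c, hj1d⟩⟩,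
      j₂, mem_bdry.mpr ⟨⟨by omega, by omega⟩, Or.inl ⟨h3, h4⟩⟩, by omega⟩

end KinkProof
namespace KinkProof

def secF (N m : ℕ) : Finset (Finset ℕ) := (sector N m).filter (· ≠ ∅)

lemma mem_secF {N m : ℕ} {X : Finset ℕ} :
    X ∈ secF N m ↔ X ∈ sector N m ∧ X ≠ ∅ := by simp [secF]

lemma two_le_lam_sub_two {N m : ℕ} {A B : ℝ} (hm : 0 < m) (hmN : m < N)
    (hA : 1 ≤ A) (hB : 1 ≤ B) {X : Finset ℕ} (hX : X ∈ secF N m) :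
    2 ≤ lam N m A B X - 2 := by
  obtain ⟨hXs, hne⟩ := mem_secF.mp hX
  have hc1 : 1 ≤ (bdry N (X ∆ Finset.Icc 1 m)).card := bdry_card_pos hm hmN hXs
  have hc1' : (1 : ℝ) ≤ (bdry N (X ∆ Finset.Icc 1 m)).card := by exact_mod_cast hc1
  by_cases h1 : 1 ∈ X <;> by_cases hN : N ∈ X <;> simp only [lam, h1, hN, if_pos, if_true, if_false, if_neg, not_false_iff, mul_one, mul_zero, add_zero]
  · linarith
  · linarith
  · linarith
  · have hc2 : 2 ≤ (bdry N (X ∆ Finset.Icc 1 m)).card := bdry_card_two hm hmN hXs hne h1 hN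
    have : (2 : ℝ) ≤ (bdry N (X ∆ Finset.Icc 1 m)).card := by exact_mod_cast hc2
    linarith

lemma card_le_lam_sub_two {N m : ℕ} {A B : ℝ} (hm : 0 < m) (hmN : m < N)
    (hA : 1 ≤ A) (hB : 1 ≤ B) {X : Finset ℕ} (hX : X ∈ secF N m) :
    ((bdry N (X ∆ Finset.Icc 1 m)).card : ℝ) ≤ lam N m A B X - 2 := by
  obtain ⟨hXs, hne⟩ := mem_secF.mp hX
  have hc1 : 1 ≤ (bdry N (X ∆ Finset.Icc 1 m)).card := bdry_card_pos hm hmN hXs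
  have hc1' : (1 : ℝ) ≤ (bdry N (X ∆ Finset.Icc 1 m)).card := by exact_mod_cast hc1
  by_cases h1 : 1 ∈ X <;> by_cases hN : N ∈ X <;> simp only [lam, h1, hN, if_pos, if_true, if_false, if_neg, not_false_iff, mul_one, mul_zero, add_zero]
  · linarith
  · linarith
  · linarith
  · have hc2 : 2 ≤ (bdry N (X ∆ Finset.Icc 1 m)).card := bdry_card_two hm hmN hXs hne h1 hN
    have : (2 : ℝ) ≤ (bdry N (X ∆ Finset.Icc 1 m)).card := by exact_mod_cast hc2
    linarith

lemma lam_sub_two_pos {N m : ℕ} {A B : ℝ} (hm : 0 < m) (hmN : m < N)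
    (hA : 1 ≤ A) (hB : 1 ≤ B) {X : Finset ℕ} (hX : X ∈ secF N m) :
    0 < lam N m A B X - 2 :=
  lt_of_lt_of_le (by norm_num) (two_le_lam_sub_two hm hmN hA hB hX)

lemma card_symmDiff_pair {Y : Finset ℕ} {j : ℕ}
    (h : (j ∈ Y ∧ j + 1 ∉ Y) ∨ (j ∉ Y ∧ j + 1 ∈ Y)) :
    (Y ∆ ({j, j + 1} : Finset ℕ)).card = Y.card := by
  rcases h with ⟨h1, h2⟩ | ⟨h1, h2⟩
  · have hset : Y ∆ ({j, j + 1} : Finset ℕ) = insert (j + 1) (Y.erase j) := by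
      ext a
      simp only [Finset.mem_symmDiff, Finset.mem_insert, Finset.mem_singleton,
        Finset.mem_erase]
      constructor
      · rintro (⟨ha, hb⟩ | ⟨(rfl | rfl), hb⟩)
        · push_neg at hb; exact Or.inr ⟨hb.1, ha⟩
        · exact absurd h1 hb
        · exact Or.inl rfl
      · rintro (rfl | ⟨ha, hb⟩)
        · exact Or.inr ⟨Or.inr rfl, h2⟩
        · exact Or.inl ⟨hb, by push_neg; exact ⟨ha, fun hc => h2 (hc ▸ hb)⟩⟩
    rw [hset, Finset.card_insert_of_notMem (by simp [h2]), Finset.card_erase_of_mem h1]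
    have : 0 < Y.card := Finset.card_pos.mpr ⟨j, h1⟩
    omega
  · have hset : Y ∆ ({j, j + 1} : Finset ℕ) = insert j (Y.erase (j + 1)) := by
      ext a
      simp only [Finset.mem_symmDiff, Finset.mem_insert, Finset.mem_singleton,
        Finset.mem_erase]
      constructor
      · rintro (⟨ha, hb⟩ | ⟨(rfl | rfl), hb⟩)
        · push_neg at hb; exact Or.inr ⟨hb.2, ha⟩
        · exact Or.inl rfl
        · exact absurd h2 hb
      · rintro (rfl | ⟨ha, hb⟩)
        · exact Or.inr ⟨Or.inl rfl, h1⟩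
        · exact Or.inl ⟨hb, by push_neg; exact ⟨fun hc => h1 (hc ▸ hb), ha⟩⟩
    rw [hset, Finset.card_insert_of_notMem (by simp [h1]), Finset.card_erase_of_mem h2]
    have : 0 < Y.card := Finset.card_pos.mpr ⟨j + 1, h2⟩
    omega

lemma symm_rw {X : Finset ℕ} {m j : ℕ} :
    (X ∆ ({j, j + 1} : Finset ℕ)) ∆ Finset.Icc 1 m = (X ∆ Finset.Icc 1 m) ∆ ({j, j + 1} : Finset ℕ) := by
  rw [symmDiff_assoc, symmDiff_assoc, symmDiff_comm ({j, j+1} : Finset ℕ)]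

lemma sector_closed {N m : ℕ} {X : Finset ℕ} {j : ℕ} (hX : X ∈ sector N m)
    (hj : j ∈ bdry N (X ∆ Finset.Icc 1 m)) :
    X ∆ ({j, j + 1} : Finset ℕ) ∈ sector N m := by
  rw [mem_sector] at hX ⊢
  obtain ⟨⟨hj1, hj2⟩, hex⟩ := mem_bdry.mp hj
  constructor
  · intro a ha
    rw [Finset.mem_symmDiff] at ha
    rcases ha with ⟨h1, _⟩ | ⟨h1, _⟩
    · exact hX.1 h1
    · simp only [Finset.mem_insert, Finset.mem_singleton] at h1
      rw [Finset.mem_Icc]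
      omega
  · rw [symm_rw, card_symmDiff_pair hex, hX.2]

lemma mem_bdry_flip {N : ℕ} {Y : Finset ℕ} {j : ℕ} (hj : j ∈ bdry N Y) :
    j ∈ bdry N (Y ∆ ({j, j + 1} : Finset ℕ)) := by
  obtain ⟨⟨hj1, hj2⟩, hex⟩ := mem_bdry.mp hj
  have e1 : j ∈ Y ∆ ({j, j + 1} : Finset ℕ) ↔ j ∉ Y := by
    simp [Finset.mem_symmDiff]
  have e2 : j + 1 ∈ Y ∆ ({j, j + 1} : Finset ℕ) ↔ j + 1 ∉ Y := by
    simp [Finset.mem_symmDiff]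
  refine mem_bdry.mpr ⟨⟨hj1, hj2⟩, ?_⟩
  rcases hex with ⟨h1, h2⟩ | ⟨h1, h2⟩
  · exact Or.inr ⟨by rw [e1]; exact fun h => h h1, e2.mpr h2⟩
  · exact Or.inl ⟨e1.mpr h1, by rw [e2]; exact fun h => h h2⟩

lemma sum_involution {N m : ℕ} (g : Finset ℕ → ℝ) :
    ∑ x ∈ (sector N m).sigma (fun X => bdry N (X ∆ Finset.Icc 1 m)),
      g (x.1 ∆ ({x.2, x.2 + 1} : Finset ℕ))
    = ∑ x ∈ (sector N m).sigma (fun X => bdry N (X ∆ Finset.Icc 1 m)), g x.1 := by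
  refine Finset.sum_nbij' (fun x => ⟨x.1 ∆ ({x.2, x.2 + 1} : Finset ℕ), x.2⟩)
    (fun x => ⟨x.1 ∆ ({x.2, x.2 + 1} : Finset ℕ), x.2⟩) ?_ ?_ ?_ ?_ ?_
  · rintro ⟨X, j⟩ hx
    rw [Finset.mem_sigma] at hx ⊢
    refine ⟨sector_closed hx.1 hx.2, ?_⟩
    rw [symm_rw]
    exact mem_bdry_flip hx.2
  · rintro ⟨X, j⟩ hx
    rw [Finset.mem_sigma] at hx ⊢
    refine ⟨sector_closed hx.1 hx.2, ?_⟩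
    rw [symm_rw]
    exact mem_bdry_flip hx.2
  · rintro ⟨X, j⟩ _
    simp [symmDiff_symmDiff_cancel_right]
  · rintro ⟨X, j⟩ _
    simp [symmDiff_symmDiff_cancel_right]
  · rintro ⟨X, j⟩ _
    rfl

lemma bdry_M_subset {N m : ℕ} : bdry N (Finset.Icc 1 m) ⊆ {m} := by
  intro j hj
  obtain ⟨⟨h1, h2⟩, hex⟩ := mem_bdry.mp hj
  rw [Finset.mem_singleton]
  rcases hex with ⟨ha, hb⟩ | ⟨ha, hb⟩ <;>
    rw [Finset.mem_Icc] at * <;> omega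

lemma pair_mem_secF {N m : ℕ} (hm : 0 < m) (hmN : m < N) :
    ({m, m + 1} : Finset ℕ) ∈ secF N m := by
  rw [mem_secF, mem_sector]
  refine ⟨⟨?_, ?_⟩, ?_⟩
  · intro a ha
    simp only [Finset.mem_insert, Finset.mem_singleton] at ha
    rw [Finset.mem_Icc]
    omega
  · have hmm : m ∈ ({m, m + 1} : Finset ℕ) := by simp
    have : (({m, m + 1} : Finset ℕ) ∆ Finset.Icc 1 m)
        = (Finset.Icc 1 m ∆ ({m, m + 1} : Finset ℕ)) := symmDiff_comm _ _
    rw [this, card_symmDiff_pair, Nat.card_Icc]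
    · omega
    · left
      constructor
      · rw [Finset.mem_Icc]; omega
      · rw [Finset.mem_Icc]; omega
  · intro h
    have : m ∈ (∅ : Finset ℕ) := h ▸ (by simp : m ∈ ({m, m+1} : Finset ℕ))
    simp at this

end KinkProof
namespace KinkProof

def Supp (N m : ℕ) (p : ℝ × (Finset ℕ → ℝ)) : Prop :=
  ∀ X, X ∉ secF N m → p.2 X = 0

lemma knorm_eq (N m : ℕ) (A B : ℝ) (p : ℝ × (Finset ℕ → ℝ)) :
    knorm N m A B p = |p.1| + ∑ X ∈ secF N m, (lam N m A B X - 2) * |p.2 X| := rfl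

lemma supp_kinkF (N m : ℕ) (ε A B : ℝ) (p : ℝ × (Finset ℕ → ℝ)) :
    Supp N m (kinkF N m ε A B p) := by
  intro X hX
  rw [mem_secF] at hX
  simp only [kinkF]
  rw [if_neg hX]

lemma kinkF_snd_of_mem {N m : ℕ} {ε A B : ℝ} {p : ℝ × (Finset ℕ → ℝ)} {X : Finset ℕ}
    (hX : X ∈ secF N m) :
    (kinkF N m ε A B p).2 X = (lam N m A B X - 2)⁻¹ *
      (-2 * ε * ∑ j ∈ bdry N (X ∆ Finset.Icc 1 m), kext p.2 (X ∆ {j, j + 1})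
        + p.1 * p.2 X) := by
  simp only [kinkF]
  rw [if_pos (mem_secF.mp hX)]

lemma knorm_nonneg {N m : ℕ} {A B : ℝ} (hm : 0 < m) (hmN : m < N)
    (hA : 1 ≤ A) (hB : 1 ≤ B) (p : ℝ × (Finset ℕ → ℝ)) : 0 ≤ knorm N m A B p := by
  rw [knorm_eq]
  have : 0 ≤ ∑ X ∈ secF N m, (lam N m A B X - 2) * |p.2 X| :=
    Finset.sum_nonneg fun X hX =>
      mul_nonneg (le_of_lt (lam_sub_two_pos hm hmN hA hB hX)) (abs_nonneg _)
  positivity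

/-- The key reindexing bound: for any coefficient family `f` vanishing outside `secF`,
the double boundary sum is controlled by the weighted norm sum. -/
lemma double_sum_le {N m : ℕ} {A B : ℝ} (hm : 0 < m) (hmN : m < N)
    (hA : 1 ≤ A) (hB : 1 ≤ B) (f : Finset ℕ → ℝ) (hf : ∀ X, X ∉ secF N m → f X = 0) :
    ∑ X ∈ secF N m, ∑ j ∈ bdry N (X ∆ Finset.Icc 1 m), |f (X ∆ ({j, j + 1} : Finset ℕ))|
      ≤ ∑ X ∈ secF N m, (lam N m A B X - 2) * |f X| := by
  have step1 : ∑ X ∈ secF N m, ∑ j ∈ bdry N (X ∆ Finset.Icc 1 m), |f (X ∆ ({j, j+1} : Finset ℕ))|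
      ≤ ∑ X ∈ sector N m, ∑ j ∈ bdry N (X ∆ Finset.Icc 1 m), |f (X ∆ ({j, j+1} : Finset ℕ))| := by
    apply Finset.sum_le_sum_of_subset_of_nonneg (Finset.filter_subset _ _)
    intro X _ _
    exact Finset.sum_nonneg fun j _ => abs_nonneg _
  have step2 : ∑ X ∈ sector N m, ∑ j ∈ bdry N (X ∆ Finset.Icc 1 m), |f (X ∆ ({j, j+1} : Finset ℕ))|
      = ∑ X ∈ sector N m, ((bdry N (X ∆ Finset.Icc 1 m)).card : ℝ) * |f X| := by
    rw [← Finset.sum_sigma (sector N m) (fun X => bdry N (X ∆ Finset.Icc 1 m))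
      (fun x => |f (x.1 ∆ ({x.2, x.2 + 1} : Finset ℕ))|)]
    rw [sum_involution (fun Z => |f Z|)]
    rw [Finset.sum_sigma]
    refine Finset.sum_congr rfl fun X _ => ?_
    dsimp only
    rw [Finset.sum_const, nsmul_eq_mul]
  have step3 : ∑ X ∈ sector N m, ((bdry N (X ∆ Finset.Icc 1 m)).card : ℝ) * |f X|
      = ∑ X ∈ secF N m, ((bdry N (X ∆ Finset.Icc 1 m)).card : ℝ) * |f X| := by
    refine (Finset.sum_subset (Finset.filter_subset _ _) ?_).symm
    intro X _ hX
    rw [hf X hX]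
    simp
  have step4 : ∑ X ∈ secF N m, ((bdry N (X ∆ Finset.Icc 1 m)).card : ℝ) * |f X|
      ≤ ∑ X ∈ secF N m, (lam N m A B X - 2) * |f X| := by
    refine Finset.sum_le_sum fun X hX => ?_
    exact mul_le_mul_of_nonneg_right (card_le_lam_sub_two hm hmN hA hB hX) (abs_nonneg _)
  calc _ ≤ _ := step1
  _ = _ := step2
  _ = _ := step3
  _ ≤ _ := step4

lemma core {N m : ℕ} {ε A B : ℝ} (hm : 0 < m) (hmN : m < N) (hA : 1 ≤ A) (hB : 1 ≤ B)
    {p q : ℝ × (Finset ℕ → ℝ)} (hp : Supp N m p) (hq : Supp N m q) :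
    knorm N m A B (kinkF N m ε A B p - kinkF N m ε A B q)
      ≤ (3 * |ε| + (knorm N m A B p + knorm N m A B q) / 2) * knorm N m A B (p - q) := by
  set S := secF N m with hS
  set M := Finset.Icc 1 m with hM
  have hw2 : ∀ X ∈ S, (2 : ℝ) ≤ lam N m A B X - 2 := fun X hX =>
    two_le_lam_sub_two hm hmN hA hB hX
  have hwpos : ∀ X ∈ S, (0 : ℝ) < lam N m A B X - 2 := fun X hX =>
    lam_sub_two_pos hm hmN hA hB hX
  have hkext : ∀ Z, kext p.2 Z - kext q.2 Z = p.2 Z - q.2 Z := by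
    intro Z
    by_cases hZ : Z = ∅
    · subst hZ
      rw [hp ∅ (by simp [mem_secF]), hq ∅ (by simp [mem_secF])]
      simp [kext]
    · simp [kext, hZ]
  set K1 := ∑ X ∈ S, (lam N m A B X - 2) * |p.2 X - q.2 X| with hK1
  have hK1nonneg : 0 ≤ K1 :=
    Finset.sum_nonneg fun X hX => mul_nonneg (le_of_lt (hwpos X hX)) (abs_nonneg _)
  -- single component bound
  have hterm : ∀ X ∈ S, 2 * |p.2 X - q.2 X| ≤ K1 := by
    intro X hX
    calc 2 * |p.2 X - q.2 X| ≤ (lam N m A B X - 2) * |p.2 X - q.2 X| :=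
          mul_le_mul_of_nonneg_right (hw2 X hX) (abs_nonneg _)
      _ ≤ K1 := Finset.single_le_sum (f := fun X => (lam N m A B X - 2) * |p.2 X - q.2 X|)
          (fun Y hY => mul_nonneg (le_of_lt (hwpos Y hY)) (abs_nonneg _)) hX
  -- the first (energy) component
  have hE : |(kinkF N m ε A B p - kinkF N m ε A B q).1| ≤ |ε| * K1 := by
    have : (kinkF N m ε A B p - kinkF N m ε A B q).1
        = 2 * ε * (p.2 {m, m+1} - q.2 {m, m+1}) := by
      simp only [Prod.fst_sub, kinkF]
      ring
    rw [this, abs_mul]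
    have h1 : |2 * ε| = 2 * |ε| := by rw [abs_mul]; norm_num
    rw [h1]
    have := hterm _ (pair_mem_secF hm hmN)
    calc 2 * |ε| * |p.2 {m, m+1} - q.2 {m, m+1}|
        = |ε| * (2 * |p.2 {m, m+1} - q.2 {m, m+1}|) := by ring
      _ ≤ |ε| * K1 := mul_le_mul_of_nonneg_left this (abs_nonneg _)
  -- pointwise bound on the second component
  have hpt : ∀ X ∈ S, (lam N m A B X - 2) *
      |(kinkF N m ε A B p - kinkF N m ε A B q).2 X|
      ≤ 2 * |ε| * (∑ j ∈ bdry N (X ∆ M), |p.2 (X ∆ ({j, j+1} : Finset ℕ)) - q.2 (X ∆ ({j, j+1} : Finset ℕ))|)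
        + |p.1| * |p.2 X - q.2 X| + |p.1 - q.1| * |q.2 X| := by
    intro X hX
    have hdiff : (kinkF N m ε A B p - kinkF N m ε A B q).2 X
        = (lam N m A B X - 2)⁻¹ *
          (-2 * ε * (∑ j ∈ bdry N (X ∆ M), (p.2 (X ∆ ({j, j+1} : Finset ℕ)) - q.2 (X ∆ ({j, j+1} : Finset ℕ))))
            + (p.1 * p.2 X - q.1 * q.2 X)) := by
      have : (kinkF N m ε A B p - kinkF N m ε A B q).2 X
          = (kinkF N m ε A B p).2 X - (kinkF N m ε A B q).2 X := rfl
      rw [this, kinkF_snd_of_mem hX, kinkF_snd_of_mem hX, ← mul_sub]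
      congr 1
      have hsum : ∑ j ∈ bdry N (X ∆ M), kext p.2 (X ∆ ({j, j+1} : Finset ℕ))
            - ∑ j ∈ bdry N (X ∆ M), kext q.2 (X ∆ ({j, j+1} : Finset ℕ))
          = ∑ j ∈ bdry N (X ∆ M), (p.2 (X ∆ ({j, j+1} : Finset ℕ)) - q.2 (X ∆ ({j, j+1} : Finset ℕ))) := by
        rw [← Finset.sum_sub_distrib]
        exact Finset.sum_congr rfl fun j _ => hkext _
      rw [← hsum]
      ring
    rw [hdiff, abs_mul, abs_inv, abs_of_pos (hwpos X hX), ← mul_assoc,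
      mul_inv_cancel₀ (ne_of_gt (hwpos X hX)), one_mul]
    have htri : |(-2 * ε * (∑ j ∈ bdry N (X ∆ M), (p.2 (X ∆ ({j, j+1} : Finset ℕ)) - q.2 (X ∆ ({j, j+1} : Finset ℕ))))
          + (p.1 * p.2 X - q.1 * q.2 X))|
        ≤ |(-2) * ε| * |∑ j ∈ bdry N (X ∆ M), (p.2 (X ∆ ({j, j+1} : Finset ℕ)) - q.2 (X ∆ ({j, j+1} : Finset ℕ)))|
          + (|p.1| * |p.2 X - q.2 X| + |p.1 - q.1| * |q.2 X|) := by
      refine le_trans (abs_add_le _ _) ?_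
      gcongr
      · rw [abs_mul]
      · have : p.1 * p.2 X - q.1 * q.2 X = p.1 * (p.2 X - q.2 X) + (p.1 - q.1) * q.2 X := by ring
        rw [this]
        refine le_trans (abs_add_le _ _) ?_
        rw [abs_mul, abs_mul]
    refine le_trans htri ?_
    have h2 : |(-2 : ℝ) * ε| = 2 * |ε| := by rw [abs_mul]; norm_num
    rw [h2]
    have habs : |∑ j ∈ bdry N (X ∆ M), (p.2 (X ∆ ({j, j+1} : Finset ℕ)) - q.2 (X ∆ ({j, j+1} : Finset ℕ)))|
        ≤ ∑ j ∈ bdry N (X ∆ M), |p.2 (X ∆ ({j, j+1} : Finset ℕ)) - q.2 (X ∆ ({j, j+1} : Finset ℕ))| :=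
      Finset.abs_sum_le_sum_abs _ _
    have := mul_le_mul_of_nonneg_left habs (by positivity : (0:ℝ) ≤ 2 * |ε|)
    linarith
  -- summing the second component
  have hsum2 : ∑ X ∈ S, (lam N m A B X - 2) * |(kinkF N m ε A B p - kinkF N m ε A B q).2 X|
      ≤ 2 * |ε| * K1 + |p.1| * (K1 / 2) + |p.1 - q.1| * (knorm N m A B q / 2) := by
    have hSB : ∑ X ∈ S, ∑ j ∈ bdry N (X ∆ M), |p.2 (X ∆ ({j, j+1} : Finset ℕ)) - q.2 (X ∆ ({j, j+1} : Finset ℕ))| ≤ K1 := by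
      have := double_sum_le hm hmN hA hB (fun Z => p.2 Z - q.2 Z)
        (fun Z hZ => by show p.2 Z - q.2 Z = 0; rw [hp Z hZ, hq Z hZ]; ring)
      exact this
    have hd2 : ∑ X ∈ S, |p.2 X - q.2 X| ≤ K1 / 2 := by
      have : ∑ X ∈ S, 2 * |p.2 X - q.2 X| ≤ K1 := by
        refine Finset.sum_le_sum fun X hX => ?_
        exact mul_le_mul_of_nonneg_right (hw2 X hX) (abs_nonneg _)
      rw [← Finset.mul_sum] at this
      linarith
    have hq2 : ∑ X ∈ S, |q.2 X| ≤ knorm N m A B q / 2 := by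
      have h1 : ∑ X ∈ S, 2 * |q.2 X| ≤ ∑ X ∈ S, (lam N m A B X - 2) * |q.2 X| := by
        refine Finset.sum_le_sum fun X hX => ?_
        exact mul_le_mul_of_nonneg_right (hw2 X hX) (abs_nonneg _)
      have h2 : ∑ X ∈ S, (lam N m A B X - 2) * |q.2 X| ≤ knorm N m A B q := by
        rw [knorm_eq]
        have : 0 ≤ |q.1| := abs_nonneg _
        linarith
      rw [← Finset.mul_sum] at h1
      linarith
    calc ∑ X ∈ S, (lam N m A B X - 2) * |(kinkF N m ε A B p - kinkF N m ε A B q).2 X|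
        ≤ ∑ X ∈ S, (2 * |ε| * (∑ j ∈ bdry N (X ∆ M), |p.2 (X ∆ ({j, j+1} : Finset ℕ)) - q.2 (X ∆ ({j, j+1} : Finset ℕ))|)
          + |p.1| * |p.2 X - q.2 X| + |p.1 - q.1| * |q.2 X|) := Finset.sum_le_sum hpt
      _ = 2 * |ε| * (∑ X ∈ S, ∑ j ∈ bdry N (X ∆ M), |p.2 (X ∆ ({j, j+1} : Finset ℕ)) - q.2 (X ∆ ({j, j+1} : Finset ℕ))|)
          + |p.1| * (∑ X ∈ S, |p.2 X - q.2 X|) + |p.1 - q.1| * (∑ X ∈ S, |q.2 X|) := by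
        rw [Finset.sum_add_distrib, Finset.sum_add_distrib, Finset.mul_sum, Finset.mul_sum, Finset.mul_sum]
      _ ≤ 2 * |ε| * K1 + |p.1| * (K1 / 2) + |p.1 - q.1| * (knorm N m A B q / 2) := by
        have t1 := mul_le_mul_of_nonneg_left hSB (by positivity : (0:ℝ) ≤ 2 * |ε|)
        have t2 := mul_le_mul_of_nonneg_left hd2 (abs_nonneg p.1)
        have t3 := mul_le_mul_of_nonneg_left hq2 (abs_nonneg (p.1 - q.1))
        linarith
  -- assemble
  have hknd : knorm N m A B (p - q) = |p.1 - q.1| + K1 := by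
    rw [knorm_eq]
    rfl
  have hnp : |p.1| ≤ knorm N m A B p := by
    rw [knorm_eq]
    have : 0 ≤ ∑ X ∈ S, (lam N m A B X - 2) * |p.2 X| :=
      Finset.sum_nonneg fun X hX => mul_nonneg (le_of_lt (hwpos X hX)) (abs_nonneg _)
    linarith
  have hnq0 : 0 ≤ knorm N m A B q := knorm_nonneg hm hmN hA hB q
  have hnp0 : 0 ≤ knorm N m A B p := knorm_nonneg hm hmN hA hB p
  have hd10 : (0:ℝ) ≤ |p.1 - q.1| := abs_nonneg _
  rw [knorm_eq]
  rw [hknd]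
  have hfin1 : |ε| * K1 + (2 * |ε| * K1) ≤ 3 * |ε| * (|p.1 - q.1| + K1) := by nlinarith [abs_nonneg ε]
  have hfin2 : |p.1| * (K1 / 2) ≤ knorm N m A B p / 2 * (|p.1 - q.1| + K1) := by nlinarith
  have hfin3 : |p.1 - q.1| * (knorm N m A B q / 2) ≤ knorm N m A B q / 2 * (|p.1 - q.1| + K1) := by nlinarith
  have := hE
  have := hsum2
  nlinarith
end KinkProof
namespace KinkProof

lemma g0_bound {N m : ℕ} {ε A B : ℝ} (hm : 0 < m) (hmN : m < N) (hA : 1 ≤ A) (hB : 1 ≤ B) :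
    knorm N m A B (kinkF N m ε A B (0, fun _ => 0)) ≤ 2 * |ε| := by
  set M := Finset.Icc 1 m with hM
  have hwpos : ∀ X ∈ secF N m, (0 : ℝ) < lam N m A B X - 2 := fun X hX =>
    lam_sub_two_pos hm hmN hA hB hX
  rw [knorm_eq]
  have hE : |(kinkF N m ε A B (0, fun _ => 0)).1| = 0 := by
    simp [kinkF]
  rw [hE]
  -- the indicator sum
  have hpt : ∀ X ∈ secF N m, (lam N m A B X - 2) * |(kinkF N m ε A B (0, fun _ => 0)).2 X|
      = 2 * |ε| * ∑ j ∈ bdry N (X ∆ M), (if X ∆ ({j, j+1} : Finset ℕ) = ∅ then (1:ℝ) else 0) := by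
    intro X hX
    rw [kinkF_snd_of_mem hX]
    have hk : ∀ j : ℕ, kext (fun _ => (0:ℝ)) (X ∆ ({j, j+1} : Finset ℕ))
        = (if X ∆ ({j, j+1} : Finset ℕ) = ∅ then (1:ℝ) else 0) := by
      intro j
      by_cases h : X ∆ ({j, j+1} : Finset ℕ) = ∅ <;> simp [kext, h]
    simp only [hk]
    have hind : (0:ℝ) ≤ ∑ j ∈ bdry N (X ∆ M), (if X ∆ ({j, j+1} : Finset ℕ) = ∅ then (1:ℝ) else 0) :=
      Finset.sum_nonneg fun j _ => by positivity
    rw [abs_mul, abs_inv, abs_of_pos (hwpos X hX), ← mul_assoc,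
      mul_inv_cancel₀ (ne_of_gt (hwpos X hX)), one_mul]
    have : ((0:ℝ) * (fun _ => (0:ℝ)) X) = 0 := by simp
    rw [this, add_zero, abs_mul, abs_of_nonneg hind]
    have : |(-2 : ℝ) * ε| = 2 * |ε| := by rw [abs_mul]; norm_num
    rw [this]
  rw [Finset.sum_congr rfl hpt, ← Finset.mul_sum]
  have hsum : ∑ X ∈ secF N m, ∑ j ∈ bdry N (X ∆ M), (if X ∆ ({j, j+1} : Finset ℕ) = ∅ then (1:ℝ) else 0) ≤ 1 := by
    have step1 : ∑ X ∈ secF N m, ∑ j ∈ bdry N (X ∆ M), (if X ∆ ({j, j+1} : Finset ℕ) = ∅ then (1:ℝ) else 0)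
        ≤ ∑ X ∈ sector N m, ∑ j ∈ bdry N (X ∆ M), (if X ∆ ({j, j+1} : Finset ℕ) = ∅ then (1:ℝ) else 0) := by
      apply Finset.sum_le_sum_of_subset_of_nonneg (Finset.filter_subset _ _)
      intro X _ _
      exact Finset.sum_nonneg fun j _ => by positivity
    have step2 : ∑ X ∈ sector N m, ∑ j ∈ bdry N (X ∆ M), (if X ∆ ({j, j+1} : Finset ℕ) = ∅ then (1:ℝ) else 0)
        = ∑ X ∈ sector N m, (if X = ∅ then ((bdry N (X ∆ M)).card : ℝ) else 0) := by
      rw [← Finset.sum_sigma (sector N m) (fun X => bdry N (X ∆ M))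
        (fun x => if x.1 ∆ ({x.2, x.2 + 1} : Finset ℕ) = ∅ then (1:ℝ) else 0)]
      rw [sum_involution (fun Z => if Z = ∅ then (1:ℝ) else 0)]
      rw [Finset.sum_sigma]
      refine Finset.sum_congr rfl fun X _ => ?_
      dsimp only
      by_cases h : X = ∅ <;> simp [h, hM]
    have step3 : ∑ X ∈ sector N m, (if X = ∅ then ((bdry N (X ∆ M)).card : ℝ) else 0) ≤ 1 := by
      rw [Finset.sum_ite_eq' (sector N m) ∅ (fun X => ((bdry N (X ∆ M)).card : ℝ))]
      rw [if_pos (empty_mem_sector hm)]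
      have h1 : bdry N ((∅ : Finset ℕ) ∆ M) = bdry N M := by
        rw [empty_symmDiff']
      rw [h1]
      have h2 : (bdry N M).card ≤ 1 := by
        have := Finset.card_le_card (bdry_M_subset (N := N) (m := m))
        simpa using this
      exact_mod_cast h2
    linarith
  have h0 : (0:ℝ) ≤ 2 * |ε| := by positivity
  nlinarith
end KinkProof
open scoped ENNReal NNReal

namespace KinkProof

abbrev V (N m : ℕ) := PiLp 1 (fun _ : Option {X // X ∈ secF N m} => ℝ)

noncomputable def Phi (N m : ℕ) (A B : ℝ) (v : V N m) : ℝ × (Finset ℕ → ℝ) :=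
  (v none, fun X => if h : X ∈ secF N m then (lam N m A B X - 2)⁻¹ * v (some ⟨X, h⟩) else 0)

noncomputable def Psi (N m : ℕ) (A B : ℝ) (p : ℝ × (Finset ℕ → ℝ)) : V N m :=
  WithLp.toLp 1 fun (o : Option {X // X ∈ secF N m}) => match o with
  | none => p.1
  | some X => (lam N m A B X.1 - 2) * p.2 X.1

lemma supp_Phi (N m : ℕ) (A B : ℝ) (v : V N m) : Supp N m (Phi N m A B v) := by
  intro X hX
  simp only [Phi]
  rw [dif_neg hX]

lemma Phi_Psi {N m : ℕ} {A B : ℝ} (hm : 0 < m) (hmN : m < N) (hA : 1 ≤ A) (hB : 1 ≤ B)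
    {p : ℝ × (Finset ℕ → ℝ)} (hsupp : Supp N m p) :
    Phi N m A B (Psi N m A B p) = p := by
  refine Prod.ext rfl ?_
  funext X
  by_cases h : X ∈ secF N m
  · simp only [Phi, Psi]
    rw [dif_pos h]
    exact inv_mul_cancel_left₀ (ne_of_gt (lam_sub_two_pos hm hmN hA hB h)) _
  · simp only [Phi]
    rw [dif_neg h, hsupp X h]

lemma Psi_Phi {N m : ℕ} {A B : ℝ} (hm : 0 < m) (hmN : m < N) (hA : 1 ≤ A) (hB : 1 ≤ B)
    (v : V N m) : Psi N m A B (Phi N m A B v) = v := by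
  refine PiLp.ext fun o => ?_
  match o with
  | none => rfl
  | some i =>
    simp only [Phi, Psi, PiLp.toLp_apply]
    rw [dif_pos i.2]
    rw [mul_inv_cancel_left₀ (ne_of_gt (lam_sub_two_pos hm hmN hA hB i.2))]

lemma Phi_sub (N m : ℕ) (A B : ℝ) (v w : V N m) :
    Phi N m A B (v - w) = Phi N m A B v - Phi N m A B w := by
  refine Prod.ext rfl ?_
  funext X
  show _ = (Phi N m A B v).2 X - (Phi N m A B w).2 X
  by_cases h : X ∈ secF N m
  · simp only [Phi]
    rw [dif_pos h, dif_pos h, dif_pos h]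
    show (lam N m A B X - 2)⁻¹ * (v (some ⟨X, h⟩) - w (some ⟨X, h⟩)) = _
    ring
  · simp only [Phi]
    rw [dif_neg h, dif_neg h, dif_neg h]
    ring

lemma Phi_zero (N m : ℕ) (A B : ℝ) :
    Phi N m A B (0 : V N m) = (0, fun _ => 0) := by
  refine Prod.ext rfl ?_
  funext X
  by_cases h : X ∈ secF N m <;> simp [Phi, h]

lemma norm_eq_knorm {N m : ℕ} {A B : ℝ} (hm : 0 < m) (hmN : m < N) (hA : 1 ≤ A) (hB : 1 ≤ B)
    (v : V N m) : ‖v‖ = knorm N m A B (Phi N m A B v) := by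
  have h1 : ‖v‖ = ∑ o : Option {X // X ∈ secF N m}, |v o| := by
    rw [PiLp.norm_eq_sum (by simp : 0 < (1 : ℝ≥0∞).toReal)]
    simp [ENNReal.toReal_one, Real.rpow_one, Real.norm_eq_abs]
  rw [h1, Fintype.sum_option, knorm_eq]
  congr 1
  have h2 : ∑ X ∈ secF N m, (lam N m A B X - 2) * |(Phi N m A B v).2 X|
      = ∑ i : {X // X ∈ secF N m}, (lam N m A B i.1 - 2) * |(Phi N m A B v).2 i.1| :=
    (Finset.sum_coe_sort (secF N m) (fun X => (lam N m A B X - 2) * |(Phi N m A B v).2 X|)).symm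
  rw [h2]
  refine Finset.sum_congr rfl fun i _ => ?_
  have hpos := lam_sub_two_pos hm hmN hA hB i.2
  simp only [Phi]
  rw [dif_pos i.2, abs_mul, abs_inv, abs_of_pos hpos, ← mul_assoc,
    mul_inv_cancel₀ (ne_of_gt hpos), one_mul, Subtype.coe_eta]

lemma main {N m : ℕ} {ε A B : ℝ} (hm : 0 < m) (hmN : m < N) (hA : 1 ≤ A) (hB : 1 ≤ B)
    (hε : |ε| ≤ 1 / 16) :
    ∃! p : ℝ × (Finset ℕ → ℝ), knorm N m A B p ≤ 1 / 2 ∧ kinkF N m ε A B p = p := by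
  classical
  set G : V N m → V N m := fun v => Psi N m A B (kinkF N m ε A B (Phi N m A B v)) with hG
  have hPhiG : ∀ v, Phi N m A B (G v) = kinkF N m ε A B (Phi N m A B v) := fun v =>
    Phi_Psi hm hmN hA hB (supp_kinkF N m ε A B (Phi N m A B v))
  have hnormG : ∀ v w : V N m, ‖v‖ ≤ 1 / 2 → ‖w‖ ≤ 1 / 2 →
      ‖G v - G w‖ ≤ 11 / 16 * ‖v - w‖ := by
    intro v w hv hw
    have e1 : ‖G v - G w‖ = knorm N m A B (Phi N m A B (G v) - Phi N m A B (G w)) := by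
      rw [norm_eq_knorm hm hmN hA hB (G v - G w), Phi_sub]
    rw [e1, hPhiG v, hPhiG w]
    have hcore := core hm hmN hA hB
      (supp_Phi N m A B v) (supp_Phi N m A B w) (ε := ε)
    have e2 : knorm N m A B (Phi N m A B v - Phi N m A B w) = ‖v - w‖ := by
      rw [norm_eq_knorm hm hmN hA hB (v - w), Phi_sub]
    rw [e2] at hcore
    refine le_trans hcore ?_
    have hv' : knorm N m A B (Phi N m A B v) ≤ 1 / 2 := by
      rw [← norm_eq_knorm hm hmN hA hB]; exact hv
    have hw' : knorm N m A B (Phi N m A B w) ≤ 1 / 2 := by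
      rw [← norm_eq_knorm hm hmN hA hB]; exact hw
    have hcoef : 3 * |ε| + (knorm N m A B (Phi N m A B v) + knorm N m A B (Phi N m A B w)) / 2
        ≤ 11 / 16 := by linarith
    exact mul_le_mul_of_nonneg_right hcoef (norm_nonneg _)
  have hG0 : ‖G 0‖ ≤ 2 * |ε| := by
    have : ‖G 0‖ = knorm N m A B (kinkF N m ε A B (Phi N m A B 0)) := by
      rw [norm_eq_knorm hm hmN hA hB (G 0), hPhiG 0]
    rw [this, Phi_zero]
    exact g0_bound hm hmN hA hB
  have hmaps : Set.MapsTo G (Metric.closedBall (0 : V N m) (1 / 2)) (Metric.closedBall 0 (1 / 2)) := by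
    intro v hv
    rw [Metric.mem_closedBall, dist_zero_right] at hv ⊢
    have h1 : ‖G v - G 0‖ ≤ 11 / 16 * ‖v - 0‖ :=
      hnormG v 0 hv (by simp)
    rw [sub_zero] at h1
    have h2 : ‖G v‖ ≤ ‖G v - G 0‖ + ‖G 0‖ := by
      have := norm_add_le (G v - G 0) (G 0)
      rwa [sub_add_cancel] at this
    linarith
  have hclosed : IsComplete (Metric.closedBall (0 : V N m) (1 / 2)) :=
    Metric.isClosed_closedBall.isComplete
  have hcontr : ContractingWith (11 / 16 : ℝ≥0) (hmaps.restrict G _ _) := by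
    constructor
    · rw [← NNReal.coe_lt_coe]; push_cast; norm_num
    · refine LipschitzWith.of_dist_le_mul fun x y => ?_
      rw [Subtype.dist_eq, Subtype.dist_eq]
      have hx : ‖(x : V N m)‖ ≤ 1 / 2 := by
        have := x.2; rwa [Metric.mem_closedBall, dist_zero_right] at this
      have hy : ‖(y : V N m)‖ ≤ 1 / 2 := by
        have := y.2; rwa [Metric.mem_closedBall, dist_zero_right] at this
      have : dist (G x) (G y) ≤ 11 / 16 * dist (x : V N m) y := by
        rw [dist_eq_norm, dist_eq_norm]
        exact hnormG x y hx hy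
      simpa using this
  have h0mem : (0 : V N m) ∈ Metric.closedBall (0 : V N m) (1 / 2) := by
    rw [Metric.mem_closedBall, dist_zero_right, norm_zero]; norm_num
  obtain ⟨v₀, hv₀S, hfix, -, -⟩ :=
    hcontr.exists_fixedPoint' hclosed hmaps h0mem (edist_ne_top _ _)
  have hv₀n : ‖v₀‖ ≤ 1 / 2 := by
    rw [Metric.mem_closedBall, dist_zero_right] at hv₀S; exact hv₀S
  refine ⟨Phi N m A B v₀, ⟨?_, ?_⟩, ?_⟩
  · rw [← norm_eq_knorm hm hmN hA hB]; exact hv₀n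
  · rw [← hPhiG v₀]
    exact congrArg (Phi N m A B) hfix
  · rintro q ⟨hqn, hqf⟩
    have hsupp : Supp N m q := hqf ▸ supp_kinkF N m ε A B q
    have hPq : Phi N m A B (Psi N m A B q) = q := Phi_Psi hm hmN hA hB hsupp
    have hnq : ‖Psi N m A B q‖ ≤ 1 / 2 := by
      rw [norm_eq_knorm hm hmN hA hB, hPq]; exact hqn
    have hGq : G (Psi N m A B q) = Psi N m A B q := by
      show Psi N m A B (kinkF N m ε A B (Phi N m A B (Psi N m A B q))) = Psi N m A B q
      rw [hPq, hqf]
    have hlip := hnormG (Psi N m A B q) v₀ hnq hv₀n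
    rw [hGq, hfix] at hlip
    have : ‖Psi N m A B q - v₀‖ = 0 := by
      have := norm_nonneg (Psi N m A B q - v₀)
      linarith
    have heq : Psi N m A B q = v₀ := by
      rwa [norm_sub_eq_zero_iff] at this
    rw [← hPq, heq]
end KinkProof


theorem kink_fixed_point_exists_unique :
    ∃ δ ε₀ : ℝ, 0 < δ ∧ δ ≤ 1 ∧ 0 < ε₀ ∧
      ∀ (N m : ℕ) (ε A B : ℝ), 0 < m → m < N → 1 ≤ A → 1 ≤ B → |ε| ≤ ε₀ →
        ∃! p : ℝ × (Finset ℕ → ℝ), knorm N m A B p ≤ δ ∧ kinkF N m ε A B p = p := by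
  refine ⟨1 / 2, 1 / 16, by norm_num, by norm_num, by norm_num, ?_⟩
  intro N m ε A B hm hmN hA hB hε
  exact KinkProof.main hm hmN hA hB hε
end
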